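/- arXiv:2307.12738 — 3 statements merged into one kernel-verified Lean document; each statement's English description precedes it below -/
import Mathlib

section
/- Let Ω ⊆ ℝⁿ be a bounded open convex set and U ∈ C²(Ω) ∩ C(closure Ω) satisfy ΔU = -2 in Ω and U = 0 on ∂Ω. Then for every X ∈ Ω, |∇U(X)| ≤ diam(Ω). -/
set_option maxHeartbeats 1600000


open scoped InnerProductSpace

open Filter Topology Bornology

/-- The Euclidean Laplacian, as the sum of second derivatives in coordinate directions. -/
noncomputable def lap {n : ℕ} (f : EuclideanSpace ℝ (Fin n) → ℝ)
    (x : EuclideanSpace ℝ (Fin n)) : ℝ :=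
  ∑ i : Fin n, fderiv ℝ (fun y => fderiv ℝ f y (EuclideanSpace.single i 1)) x
    (EuclideanSpace.single i 1)

section Aux

/-- Second derivative test: at a local max at `0`, the second derivative is nonpositive. -/
theorem sd_test {g g' : ℝ → ℝ} {c : ℝ} (hmax : IsLocalMax g 0)
    (hg : ∀ᶠ t in 𝓝 (0:ℝ), HasDerivAt g (g' t) t) (hg' : HasDerivAt g' c 0) : c ≤ 0 := by
  by_contra hc
  push_neg at hc
  have hg0 : g' 0 = 0 := hmax.hasDerivAt_eq_zero hg.self_of_nhds
  have hslope : Tendsto (fun t => g' t / t) (𝓝[>] (0:ℝ)) (𝓝 c) := by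
    have h1 := hasDerivAt_iff_tendsto_slope.mp hg'
    have hsub : Set.Ioi (0:ℝ) ⊆ {(0:ℝ)}ᶜ := by intro t ht; exact ne_of_gt ht
    have h2 := h1.mono_left (nhdsWithin_mono _ hsub)
    refine h2.congr' ?_
    filter_upwards [self_mem_nhdsWithin] with t ht
    rw [slope_def_field, hg0, sub_zero, sub_zero]
  have hpos : ∀ᶠ t in 𝓝[>] (0:ℝ), 0 < g' t := by
    filter_upwards [hslope.eventually (eventually_gt_nhds hc), self_mem_nhdsWithin]
      with t h1 h2
    have ht : (0:ℝ) < t := h2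
    have := mul_pos h1 ht
    rwa [div_mul_cancel₀ _ (ne_of_gt ht)] at this
  obtain ⟨δ₁, hδ₁, hprop⟩ := Metric.mem_nhdsWithin_iff.mp hpos
  obtain ⟨δ₂, hδ₂, hder⟩ := Metric.eventually_nhds_iff.mp hg
  obtain ⟨δ₃, hδ₃, hmx⟩ := Metric.eventually_nhds_iff.mp hmax
  set δ : ℝ := min δ₁ (min δ₂ δ₃) / 2 with hδdef
  have hδpos : 0 < δ := by positivity
  have hδlt : ∀ t ∈ Set.Icc (0:ℝ) δ, dist t 0 < min δ₁ (min δ₂ δ₃) := by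
    intro t ht
    rw [Real.dist_eq, sub_zero, abs_of_nonneg ht.1]
    have := ht.2
    have h0 : (0:ℝ) < min δ₁ (min δ₂ δ₃) := by positivity
    linarith
  have hmono : StrictMonoOn g (Set.Icc 0 δ) := by
    apply strictMonoOn_of_deriv_pos (convex_Icc _ _)
    · intro t ht
      exact ((hder (lt_of_lt_of_le (hδlt t ht) (le_trans (min_le_right _ _) (min_le_left _ _)))).differentiableAt).continuousAt.continuousWithinAt
    · intro t ht
      rw [interior_Icc] at ht
      have htI : t ∈ Set.Icc (0:ℝ) δ := ⟨le_of_lt ht.1, le_of_lt ht.2⟩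
      have hd := hder (lt_of_lt_of_le (hδlt t htI) (le_trans (min_le_right _ _) (min_le_left _ _)))
      rw [hd.deriv]
      refine hprop ⟨?_, ht.1⟩
      rw [Metric.mem_ball]
      exact lt_of_lt_of_le (hδlt t htI) (min_le_left _ _)
  have h1 : g 0 < g δ := hmono (Set.left_mem_Icc.mpr (le_of_lt hδpos)) (Set.right_mem_Icc.mpr (le_of_lt hδpos)) hδpos
  have h2 : g δ ≤ g 0 := hmx (by
    rw [Real.dist_eq, sub_zero, abs_of_nonneg (le_of_lt hδpos)]
    have h0 : (0:ℝ) < min δ₁ (min δ₂ δ₃) := by positivity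
    have h1 : δ < min δ₁ (min δ₂ δ₃) := by rw [hδdef]; linarith
    exact lt_of_lt_of_le h1 (le_trans (min_le_right _ _) (min_le_right _ _)))
  linarith

variable {n : ℕ}

local notation "E" => EuclideanSpace ℝ (Fin n)

theorem line_hasDerivAt {v : E → ℝ} {x w : E} {t : ℝ}
    (hv : DifferentiableAt ℝ v (x + t • w)) :
    HasDerivAt (fun s => v (x + s • w)) (fderiv ℝ v (x + t • w) w) t := by
  have hc : HasDerivAt (fun s : ℝ => x + s • w) w t := by
    simpa using ((hasDerivAt_id t).smul_const w).const_add x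
  exact hv.hasFDerivAt.comp_hasDerivAt t hc

/-- Second directional derivative is nonpositive at an interior local maximum. -/
theorem sder_nonpos {s : Set E} (hs : IsOpen s) {v : E → ℝ} (hv : ContDiffOn ℝ 2 v s)
    {x : E} (hx : x ∈ s) (hmax : IsLocalMax v x) (w : E) :
    fderiv ℝ (fun y => fderiv ℝ v y w) x w ≤ 0 := by
  have hct : ∀ y ∈ s, ContDiffAt ℝ 2 v y := fun y hy => hv.contDiffAt (hs.mem_nhds hy)
  have hdiff : ∀ y ∈ s, DifferentiableAt ℝ v y := fun y hy =>
    ((hct y hy).differentiableAt (by norm_num))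
  have hline : Tendsto (fun t : ℝ => x + t • w) (𝓝 0) (𝓝 x) := by
    have hcont : Continuous (fun t : ℝ => x + t • w) := by continuity
    have := hcont.tendsto 0
    simpa using this
  have hev : ∀ᶠ t in 𝓝 (0:ℝ), x + t • w ∈ s := hline.eventually (hs.mem_nhds hx)
  have hg : ∀ᶠ t in 𝓝 (0:ℝ),
      HasDerivAt (fun u => v (x + u • w)) (fderiv ℝ v (x + t • w) w) t := by
    filter_upwards [hev] with t ht
    exact line_hasDerivAt (hdiff _ ht)
  have hmaxg : IsLocalMax (fun t : ℝ => v (x + t • w)) 0 := by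
    have := hline.eventually hmax
    simpa [IsLocalMax, IsMaxFilter] using this
  -- the inner derivative function
  have hFdiff : DifferentiableAt ℝ (fun y => fderiv ℝ v y w) x := by
    have h1 : ContDiffAt ℝ 1 (fderiv ℝ v) x := (hct x hx).fderiv_right (by norm_num)
    exact (h1.differentiableAt (by norm_num)).clm_apply (differentiableAt_const w)
  have hg' : HasDerivAt (fun t : ℝ => fderiv ℝ v (x + t • w) w)
      (fderiv ℝ (fun y => fderiv ℝ v y w) x w) 0 := by
    have := line_hasDerivAt (v := fun y => fderiv ℝ v y w) (x := x) (w := w) (t := 0)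
      (by simpa using hFdiff)
    simpa using this
  exact sd_test hmaxg hg hg'

theorem lap_nonpos_of_isLocalMax {s : Set E} (hs : IsOpen s) {v : E → ℝ}
    (hv : ContDiffOn ℝ 2 v s) {x : E} (hx : x ∈ s) (hmax : IsLocalMax v x) :
    lap v x ≤ 0 :=
  Finset.sum_nonpos fun i _ => sder_nonpos hs hv hx hmax _

/-- Additivity of the Laplacian for functions that are `C²` on an open set. -/
theorem lap_add {s : Set E} (hs : IsOpen s) {v w : E → ℝ}
    (hv : ContDiffOn ℝ 2 v s) (hw : ContDiffOn ℝ 2 w s) {x : E} (hx : x ∈ s) :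
    lap (fun y => v y + w y) x = lap v x + lap w x := by
  have hdv : ∀ y ∈ s, DifferentiableAt ℝ v y := fun y hy =>
    (hv.contDiffAt (hs.mem_nhds hy)).differentiableAt (by norm_num)
  have hdw : ∀ y ∈ s, DifferentiableAt ℝ w y := fun y hy =>
    (hw.contDiffAt (hs.mem_nhds hy)).differentiableAt (by norm_num)
  have hFv : DifferentiableAt ℝ (fun y => fderiv ℝ v y) x :=
    (((hv.contDiffAt (hs.mem_nhds hx)).fderiv_right (m := 1)
      (by norm_num)).differentiableAt (by norm_num))
  have hFw : DifferentiableAt ℝ (fun y => fderiv ℝ w y) x :=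
    (((hw.contDiffAt (hs.mem_nhds hx)).fderiv_right (m := 1)
      (by norm_num)).differentiableAt (by norm_num))
  unfold lap
  rw [← Finset.sum_add_distrib]
  refine Finset.sum_congr rfl fun i _ => ?_
  set u : E := EuclideanSpace.single i 1
  have step1 : (fun y => fderiv ℝ (fun z => v z + w z) y u)
      =ᶠ[𝓝 x] fun y => fderiv ℝ v y u + fderiv ℝ w y u := by
    filter_upwards [hs.mem_nhds hx] with y hy
    rw [fderiv_fun_add (hdv y hy) (hdw y hy)]
    rfl
  have hdGv : DifferentiableAt ℝ (fun y => fderiv ℝ v y u) x :=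
    hFv.clm_apply (differentiableAt_const u)
  have hdGw : DifferentiableAt ℝ (fun y => fderiv ℝ w y u) x :=
    hFw.clm_apply (differentiableAt_const u)
  rw [step1.fderiv_eq, fderiv_fun_add hdGv hdGw]
  rfl

/-- The Laplacian of a negation. -/
theorem lap_neg (v : E → ℝ) (x : E) : lap (fun y => -(v y)) x = -(lap v x) := by
  unfold lap
  rw [← Finset.sum_neg_distrib]
  refine Finset.sum_congr rfl fun i _ => ?_
  set u : E := EuclideanSpace.single i 1
  have step1 : (fun y => fderiv ℝ (fun z => -(v z)) y u)
      = fun y => -(fderiv ℝ v y u) := by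
    funext y
    rw [fderiv_fun_neg]
    rfl
  rw [step1, fderiv_fun_neg]
  rfl

/-- The Laplacian is unchanged by adding a constant. -/
theorem lap_add_const (v : E → ℝ) (c : ℝ) (x : E) :
    lap (fun y => v y + c) x = lap v x := by
  unfold lap
  refine Finset.sum_congr rfl fun i _ => ?_
  set u : E := EuclideanSpace.single i 1
  have step1 : (fun y => fderiv ℝ (fun z => v z + c) y u)
      = fun y => fderiv ℝ v y u := by
    funext y
    rw [fderiv_add_const]
  rw [step1]

/-- The Laplacian of a quadratic function of a linear functional. -/
theorem lap_quad (f : E →L[ℝ] ℝ) (α β : ℝ) (x : E) :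
    lap (fun y => α * (f y * f y) + β * f y) x
      = 2 * α * ∑ i : Fin n, f (EuclideanSpace.single i 1) * f (EuclideanSpace.single i 1) := by
  have hD : ∀ y : E, HasFDerivAt (fun z => α * (f z * f z) + β * f z)
      ((α * (2 * f y) + β) • (f : E →L[ℝ] ℝ)) y := by
    intro y
    have h1 : HasFDerivAt f (f : E →L[ℝ] ℝ) y := f.hasFDerivAt
    have h := ((h1.mul h1).const_mul α).add (h1.const_mul β)
    have heq : α • (f y • (f : E →L[ℝ] ℝ) + f y • (f : E →L[ℝ] ℝ)) + β • (f : E →L[ℝ] ℝ)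
        = (α * (2 * f y) + β) • (f : E →L[ℝ] ℝ) := by
      ext z
      simp [ContinuousLinearMap.smul_apply, ContinuousLinearMap.add_apply, smul_eq_mul]
      ring
    rwa [heq] at h
  unfold lap
  rw [Finset.mul_sum]
  refine Finset.sum_congr rfl fun i _ => ?_
  set u : E := EuclideanSpace.single i 1
  have step1 : (fun y => fderiv ℝ (fun z => α * (f z * f z) + β * f z) y u)
      = fun y => (2 * α * f u) * f y + β * f u := by
    funext y
    rw [(hD y).fderiv]
    simp [ContinuousLinearMap.smul_apply, smul_eq_mul]
    ring
  rw [step1]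
  have h2 : HasFDerivAt (fun y : E => (2 * α * f u) * f y + β * f u)
      ((2 * α * f u) • (f : E →L[ℝ] ℝ)) x := by
    have h1 : HasFDerivAt f (f : E →L[ℝ] ℝ) x := f.hasFDerivAt
    simpa using (h1.const_mul (2 * α * f u)).add_const (β * f u)
  rw [h2.fderiv]
  simp [ContinuousLinearMap.smul_apply, smul_eq_mul]
  ring

/-- The Laplacian commutes with translation. -/
theorem lap_translate {s : Set E} (hs : IsOpen s) {v : E → ℝ}
    (hv : ContDiffOn ℝ 2 v s) {x h : E} (hx : x + h ∈ s) :
    lap (fun y => v (y + h)) x = lap v (x + h) := by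
  have hdv : ∀ y ∈ s, DifferentiableAt ℝ v y := fun y hy =>
    (hv.contDiffAt (hs.mem_nhds hy)).differentiableAt (by norm_num)
  have htr : ∀ z : E, HasFDerivAt (fun y : E => y + h) (ContinuousLinearMap.id ℝ E) z :=
    fun z => (hasFDerivAt_id z).add_const h
  unfold lap
  refine Finset.sum_congr rfl fun i _ => ?_
  set u : E := EuclideanSpace.single i 1
  have hsopen : IsOpen {y : E | y + h ∈ s} := by
    have : {y : E | y + h ∈ s} = (fun y : E => y + h) ⁻¹' s := rfl
    rw [this]
    exact hs.preimage (by continuity)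
  have step1 : (fun y => fderiv ℝ (fun z => v (z + h)) y u)
      =ᶠ[𝓝 x] fun y => fderiv ℝ v (y + h) u := by
    filter_upwards [hsopen.mem_nhds hx] with y hy
    have hcomp := ((hdv _ hy).hasFDerivAt.comp y (htr y))
    rw [ContinuousLinearMap.comp_id] at hcomp
    have hcomp' : HasFDerivAt (fun z => v (z + h)) (fderiv ℝ v (y + h)) y := hcomp
    rw [hcomp'.fderiv]
  rw [step1.fderiv_eq]
  have hG : DifferentiableAt ℝ (fun z => fderiv ℝ v z u) (x + h) :=
    (((hv.contDiffAt (hs.mem_nhds hx)).fderiv_right (m := 1)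
      (by norm_num)).differentiableAt (by norm_num)).clm_apply (differentiableAt_const u)
  have hcomp := (hG.hasFDerivAt.comp x (htr x))
  rw [ContinuousLinearMap.comp_id] at hcomp
  have hcomp' : HasFDerivAt (fun y => fderiv ℝ v (y + h) u)
      (fderiv ℝ (fun z => fderiv ℝ v z u) (x + h)) x := hcomp
  rw [hcomp'.fderiv]

/-- The maximum principle for `lap`-subharmonic functions. -/
theorem maxp (hn : 0 < n) {s : Set E} (hsb : IsBounded s) (hs : IsOpen s) {v : E → ℝ}
    (hc : ContinuousOn v (closure s)) (hv : ContDiffOn ℝ 2 v s)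
    (hsub : ∀ x ∈ s, 0 ≤ lap v x) (hfr : ∀ x ∈ frontier s, v x ≤ 0) :
    ∀ x ∈ s, v x ≤ 0 := by
  intro x hx
  obtain ⟨i₀⟩ : Nonempty (Fin n) := ⟨⟨0, hn⟩⟩
  obtain ⟨L, hLdef⟩ : ∃ L : (EuclideanSpace ℝ (Fin n)) →L[ℝ] ℝ,
      L = innerSL ℝ (EuclideanSpace.single i₀ (1:ℝ)) := ⟨_, rfl⟩
  have hS : ∑ i : Fin n, L (EuclideanSpace.single i 1) * L (EuclideanSpace.single i 1) = 1 := by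
    have h : ∀ i : Fin n, L (EuclideanSpace.single i 1) = if i = i₀ then 1 else 0 := by
      intro i
      rw [hLdef]
      simp [EuclideanSpace.inner_single_left, EuclideanSpace.single_apply]
      exact if_congr eq_comm rfl rfl
    rw [Finset.sum_congr rfl (fun i _ => by rw [h i])]
    simp
  obtain ⟨R₀, hR₀⟩ := hsb.closure.subset_closedBall 0
  obtain ⟨M, hM1, hMb⟩ : ∃ M : ℝ, 1 ≤ M ∧ ∀ y ∈ closure s, L y * L y < M := by
    refine ⟨(‖L‖ * max R₀ 0 + 1) * (‖L‖ * max R₀ 0 + 1), ?_, ?_⟩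
    · nlinarith [norm_nonneg L, le_max_right R₀ (0:ℝ), mul_nonneg (norm_nonneg L) (le_max_right R₀ (0:ℝ))]
    · intro y hy
      have h1 : ‖y‖ ≤ max R₀ 0 := by
        have := hR₀ hy
        rw [Metric.mem_closedBall, dist_zero_right] at this
        exact le_trans this (le_max_left _ _)
      have h2 : |L y| ≤ ‖L‖ * max R₀ 0 := by
        calc |L y| = ‖L y‖ := rfl
          _ ≤ ‖L‖ * ‖y‖ := L.le_opNorm y
          _ ≤ ‖L‖ * max R₀ 0 := mul_le_mul_of_nonneg_left h1 (norm_nonneg _)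
      have h3 : 0 ≤ ‖L‖ * max R₀ 0 := mul_nonneg (norm_nonneg _) (le_max_right _ _)
      nlinarith [abs_nonneg (L y), neg_abs_le (L y), le_abs_self (L y)]
  have hMpos : (0:ℝ) < M := lt_of_lt_of_le one_pos hM1
  have key : ∀ ε : ℝ, 0 < ε → v x ≤ ε * M := by
    intro ε hε
    obtain ⟨w, hwdef⟩ : ∃ w : EuclideanSpace ℝ (Fin n) → ℝ,
        w = fun y => ε * (L y * L y) + 0 * L y + -(ε * M) := ⟨_, rfl⟩
    have hwval : ∀ y, w y = ε * (L y * L y) - ε * M := by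
      intro y; rw [hwdef]; ring
    have hwsmooth : ContDiff ℝ 2 w := by
      rw [hwdef]
      exact ((contDiff_const.mul (L.contDiff.mul L.contDiff)).add
        (contDiff_const.mul L.contDiff)).add contDiff_const
    obtain ⟨vε, hvεdef⟩ : ∃ vε : EuclideanSpace ℝ (Fin n) → ℝ,
        vε = fun y => v y + w y := ⟨_, rfl⟩
    have hvεval : ∀ y, vε y = v y + w y := fun y => by rw [hvεdef]
    have hlapw : ∀ z : EuclideanSpace ℝ (Fin n), lap w z = 2 * ε := by
      intro z
      rw [hwdef]
      have h1 := lap_add_const (n := n) (fun y => ε * (L y * L y) + 0 * L y) (-(ε * M)) z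
      rw [h1, lap_quad, hS]
      ring
    have hvεcont : ContinuousOn vε (closure s) := by
      rw [hvεdef]
      exact hc.add (hwsmooth.continuous.continuousOn)
    have hvεC2 : ContDiffOn ℝ 2 vε s := by
      rw [hvεdef]; exact hv.add (hwsmooth.contDiffOn)
    have hclos : IsCompact (closure s) := hsb.isCompact_closure
    obtain ⟨x₀, hx₀mem, hmaxon⟩ := hclos.exists_isMaxOn ⟨x, subset_closure hx⟩ hvεcont
    have hx₀fr : x₀ ∈ frontier s := by
      by_contra hx₀s
      have hx₀s' : x₀ ∈ s := by
        have hcl : x₀ ∈ s ∪ frontier s := by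
          rw [← closure_eq_self_union_frontier]
          exact hx₀mem
        rcases hcl with h | h
        · exact h
        · exact absurd h hx₀s
      have hlocal : IsLocalMax vε x₀ :=
        hmaxon.isLocalMax (mem_of_superset (hs.mem_nhds hx₀s') subset_closure)
      have h1 : lap vε x₀ ≤ 0 := lap_nonpos_of_isLocalMax hs hvεC2 hx₀s' hlocal
      have h2 : lap vε x₀ = lap v x₀ + 2 * ε := by
        have := lap_add hs hv hwsmooth.contDiffOn hx₀s'
        rw [hvεdef, this, hlapw]
      have h3 := hsub x₀ hx₀s'
      linarith
    have hvε0 : vε x₀ ≤ 0 := by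
      have h1 : v x₀ ≤ 0 := hfr x₀ hx₀fr
      have h2 : w x₀ ≤ 0 := by
        have h4 := hMb x₀ (frontier_subset_closure hx₀fr)
        rw [hwval]
        nlinarith
      rw [hvεval]
      linarith
    have hvx : vε x ≤ 0 := le_trans (hmaxon (subset_closure hx)) hvε0
    have hwx : -(ε * M) ≤ w x := by
      rw [hwval]
      nlinarith [mul_self_nonneg (L x)]
    rw [hvεval] at hvx
    linarith
  by_contra hvx
  push_neg at hvx
  have hk := key (v x / (2 * M)) (by positivity)
  rw [div_mul_eq_mul_div, mul_comm] at hk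
  have h2 : M * v x / (2 * M) = v x / 2 := by
    field_simp
  rw [h2] at hk
  linarith

/-- Sum of squares of coordinate evaluations of a functional equals its norm squared. -/
theorem sum_sq_eval (g : E →L[ℝ] ℝ) :
    ∑ i : Fin n, g (EuclideanSpace.single i 1) * g (EuclideanSpace.single i 1) = ‖g‖ ^ 2 := by
  obtain ⟨u, hu⟩ : ∃ u : E, (InnerProductSpace.toDual ℝ (EuclideanSpace ℝ (Fin n))) u = g :=
    ⟨(InnerProductSpace.toDual ℝ (EuclideanSpace ℝ (Fin n))).symm g, by simp⟩
  have hg : ∀ y, g y = ⟪u, y⟫_ℝ := by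
    intro y
    rw [← hu]
    rfl
  have h1 : ∀ i : Fin n, g (EuclideanSpace.single i 1) = u i := by
    intro i
    rw [hg]
    simp [EuclideanSpace.inner_single_right]
  calc ∑ i : Fin n, g (EuclideanSpace.single i 1) * g (EuclideanSpace.single i 1)
      = ∑ i : Fin n, u i * u i := by
        refine Finset.sum_congr rfl fun i _ => by rw [h1]
    _ = ⟪u, u⟫_ℝ := by
        rw [PiLp.inner_apply]
        rfl
    _ = ‖u‖ ^ 2 := real_inner_self_eq_norm_sq u
    _ = ‖g‖ ^ 2 := by
        rw [← hu, (InnerProductSpace.toDual ℝ (EuclideanSpace ℝ (Fin n))).norm_map]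

end Aux

/-- Gradient bound for the torsion function: if `Ω ⊆ ℝⁿ` is a bounded open convex set and
`U ∈ C²(Ω) ∩ C(closure Ω)` satisfies `ΔU = -2` in `Ω` and `U = 0` on `∂Ω`, then
`|∇U(X)| ≤ diam Ω` for every `X ∈ Ω`. -/
theorem stmt_1 (n : ℕ) (Ω : Set (EuclideanSpace ℝ (Fin n)))
    (hb : Bornology.IsBounded Ω) (ho : IsOpen Ω) (hconv : Convex ℝ Ω)
    (hne : Ω.Nonempty)
    (U : EuclideanSpace ℝ (Fin n) → ℝ)
    (hUc : ContinuousOn U (closure Ω)) (hU2 : ContDiffOn ℝ 2 U Ω)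
    (hlap : ∀ x ∈ Ω, lap U x = -2)
    (hbd : ∀ x ∈ frontier Ω, U x = 0)
    (X : EuclideanSpace ℝ (Fin n)) (hX : X ∈ Ω) :
    ‖gradient U X‖ ≤ Metric.diam Ω := by
  rcases Nat.eq_zero_or_pos n with hn0 | hn
  · subst hn0
    have := hlap X hX
    simp [lap] at this
  set d : ℝ := Metric.diam Ω with hddef
  have hd0 : 0 ≤ d := Metric.diam_nonneg
  have hclosUnion : ∀ z ∈ closure Ω, z ∈ Ω ∨ z ∈ frontier Ω := by
    intro z hz
    have : z ∈ Ω ∪ frontier Ω := by rw [← closure_eq_self_union_frontier]; exact hz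
    exact this
  -- Step 1 : U ≥ 0 on the closure
  have hU0 : ∀ z ∈ closure Ω, 0 ≤ U z := by
    have hneg : ∀ z ∈ Ω, (fun y => -(U y)) z ≤ 0 := by
      refine maxp hn hb ho hUc.neg hU2.neg ?_ ?_
      · intro z hz
        rw [lap_neg, hlap z hz]
        norm_num
      · intro z hz
        simp [hbd z hz]
    intro z hz
    rcases hclosUnion z hz with h | h
    · have := hneg z h
      simpa using this
    · rw [hbd z h]
  -- Step 2 : boundary barrier estimate
  have hbar : ∀ z ∈ frontier Ω, ∀ h : EuclideanSpace ℝ (Fin n),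
      z + h ∈ closure Ω → U (z + h) ≤ d * ‖h‖ := by
    intro z hz h hzh
    have hznot : z ∉ Ω := by
      rw [ho.frontier_eq] at hz
      exact hz.2
    obtain ⟨f, hf⟩ := geometric_hahn_banach_open_point hconv ho hznot
    have hfne : ‖f‖ ≠ 0 := by
      intro hf0
      obtain ⟨a₀, ha₀⟩ := hne
      have := hf a₀ ha₀
      rw [norm_eq_zero] at hf0
      rw [hf0] at this
      simp at this
    have hfpos : 0 < ‖f‖ := lt_of_le_of_ne (norm_nonneg f) (Ne.symm hfne)
    obtain ⟨L, hLdef⟩ : ∃ L : EuclideanSpace ℝ (Fin n) →L[ℝ] ℝ, L = ‖f‖⁻¹ • f := ⟨_, rfl⟩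
    have hLnorm : ‖L‖ = 1 := by
      rw [hLdef, norm_smul (‖f‖⁻¹) f]
      simp [abs_of_nonneg (inv_nonneg.mpr (norm_nonneg f)), inv_mul_cancel₀ hfne]
    have hLval : ∀ y, L y = ‖f‖⁻¹ * f y := by
      intro y; rw [hLdef]; rfl
    have hLlt : ∀ a ∈ Ω, L a < L z := by
      intro a ha
      rw [hLval, hLval]
      exact mul_lt_mul_of_pos_left (hf a ha) (inv_pos.mpr hfpos)
    have hLle : ∀ y ∈ closure Ω, L y ≤ L z := by
      have hcl : closure Ω ⊆ {y | L y ≤ L z} :=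
        closure_minimal (fun a ha => le_of_lt (hLlt a ha)) (isClosed_le L.continuous continuous_const)
      exact fun y hy => hcl hy
    have hLlip : ∀ y ∈ closure Ω, L z - L y ≤ d := by
      intro y hy
      have h1 : L z - L y = L (z - y) := by rw [map_sub]
      have h2 : L (z - y) ≤ |L (z - y)| := le_abs_self _
      have h3 : |L (z - y)| ≤ ‖L‖ * ‖z - y‖ := L.le_opNorm (z - y)
      have h4 : ‖z - y‖ = dist z y := (dist_eq_norm z y).symm
      have h5 : dist z y ≤ d := by
        rw [hddef, ← Metric.diam_closure]
        exact Metric.dist_le_diam_of_mem hb.closure (frontier_subset_closure hz) hy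
      rw [h1]
      calc L (z - y) ≤ |L (z - y)| := h2
        _ ≤ ‖L‖ * ‖z - y‖ := h3
        _ = dist z y := by rw [hLnorm, one_mul, h4]
        _ ≤ d := h5
    obtain ⟨b, hbdef⟩ : ∃ b : ℝ, b = L z := ⟨_, rfl⟩
    -- comparison function U + Q with Q = -(slab barrier)
    have hScomp : ∑ i : Fin n, L (EuclideanSpace.single i 1) * L (EuclideanSpace.single i 1)
        = 1 := by
      rw [sum_sq_eval, hLnorm]
      norm_num
    have hcomp : ∀ y ∈ closure Ω,
        U y + ((1 * (L y * L y) + (-(2 * b - d)) * L y) + (b * b - d * b)) ≤ 0 := by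
      have hQfr : ∀ y ∈ frontier Ω,
          U y + ((1 * (L y * L y) + (-(2 * b - d)) * L y) + (b * b - d * b)) ≤ 0 := by
        intro y hy
        have hyc : y ∈ closure Ω := frontier_subset_closure hy
        have hA : 0 ≤ L y - (b - d) := by
          have := hLlip y hyc; rw [hbdef]; linarith [hLlip y hyc]
        have hB : 0 ≤ b - L y := by rw [hbdef]; linarith [hLle y hyc]
        have hprod : 0 ≤ (L y - (b - d)) * (b - L y) := mul_nonneg hA hB
        rw [hbd y hy]
        nlinarith [hprod]
      have hQin : ∀ y ∈ Ω,
          U y + ((1 * (L y * L y) + (-(2 * b - d)) * L y) + (b * b - d * b)) ≤ 0 := by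
        have hQsmooth : ContDiff ℝ 2 (fun y : EuclideanSpace ℝ (Fin n) =>
            (1 * (L y * L y) + (-(2 * b - d)) * L y) + (b * b - d * b)) :=
          (((contDiff_const.mul (L.contDiff.mul L.contDiff)).add
            (contDiff_const.mul L.contDiff)).add contDiff_const)
        refine maxp hn hb ho (hUc.add hQsmooth.continuous.continuousOn)
          (hU2.add hQsmooth.contDiffOn) ?_ hQfr
        intro y hy
        rw [lap_add ho hU2 hQsmooth.contDiffOn hy, hlap y hy,
          lap_add_const (fun y => 1 * (L y * L y) + (-(2 * b - d)) * L y) (b * b - d * b),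
          lap_quad, hScomp]
        norm_num
      intro y hy
      rcases hclosUnion y hy with h | h
      · exact hQin y h
      · exact hQfr y h
    have hkey := hcomp (z + h) hzh
    have hA1 : L (z + h) - (b - d) ≤ d := by
      have := hLle (z + h) hzh; rw [hbdef]; linarith [hLle (z + h) hzh]
    have hA0 : 0 ≤ L (z + h) - (b - d) := by
      have := hLlip (z + h) hzh; rw [hbdef]; linarith [hLlip (z + h) hzh]
    have hB0 : 0 ≤ b - L (z + h) := by rw [hbdef]; linarith [hLle (z + h) hzh]
    have hB1 : b - L (z + h) ≤ ‖h‖ := by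
      have h1 : b - L (z + h) = -(L h) := by rw [hbdef, map_add]; ring
      have h2 : -(L h) ≤ |L h| := neg_le_abs _
      have h3 : |L h| ≤ ‖L‖ * ‖h‖ := L.le_opNorm h
      rw [h1]
      calc -(L h) ≤ |L h| := h2
        _ ≤ ‖L‖ * ‖h‖ := h3
        _ = ‖h‖ := by rw [hLnorm, one_mul]
    have hprod : (L (z + h) - (b - d)) * (b - L (z + h)) ≤ d * ‖h‖ :=
      mul_le_mul hA1 hB1 hB0 hd0
    nlinarith [hkey, hprod]
  -- Step 3 : translation estimate
  have htrans : ∀ (h : EuclideanSpace ℝ (Fin n)), ∀ x ∈ Ω, x + h ∈ Ω →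
      U (x + h) - U x ≤ d * ‖h‖ := by
    intro h x hxΩ hxh
    obtain ⟨D, hDdef⟩ : ∃ D : Set (EuclideanSpace ℝ (Fin n)),
        D = Ω ∩ ((fun y => y + h) ⁻¹' Ω) := ⟨_, rfl⟩
    have hDopen : IsOpen D := by
      rw [hDdef]
      exact ho.inter (ho.preimage (by continuity))
    have hDsub : D ⊆ Ω := by rw [hDdef]; exact Set.inter_subset_left
    have hDsub2 : ∀ y ∈ D, y + h ∈ Ω := by
      intro y hy; rw [hDdef] at hy; exact hy.2
    have hDb : IsBounded D := hb.subset hDsub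
    have hxD : x ∈ D := by rw [hDdef]; exact ⟨hxΩ, hxh⟩
    have hclD : closure D ⊆ closure Ω := closure_mono hDsub
    have hclD2 : ∀ y ∈ closure D, y + h ∈ closure Ω := by
      intro y hy
      have h1 : closure D ⊆ closure ((fun y => y + h) ⁻¹' Ω) := by
        rw [hDdef]
        exact le_trans (closure_mono Set.inter_subset_right) (le_refl _)
      have h2 : closure ((fun y : EuclideanSpace ℝ (Fin n) => y + h) ⁻¹' Ω)
          = (fun y => y + h) ⁻¹' closure Ω := by
        have := (Homeomorph.addRight h (G := EuclideanSpace ℝ (Fin n))).preimage_closure Ω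
        simpa using this.symm
      exact (h2 ▸ h1) hy
    -- the comparison function
    have htrC2 : ContDiffOn ℝ 2 (fun y : EuclideanSpace ℝ (Fin n) => U (y + h)) D := by
      refine hU2.comp ((contDiff_id.add contDiff_const).contDiffOn) ?_
      intro y hy
      exact hDsub2 y hy
    have htrcont : ContinuousOn (fun y : EuclideanSpace ℝ (Fin n) => U (y + h)) (closure D) := by
      refine hUc.comp ((continuous_id.add continuous_const).continuousOn) ?_
      intro y hy
      exact hclD2 y hy
    have hvfr : ∀ zz ∈ frontier D,
        (fun y => (U (y + h) + (-(U y))) + (-(d * ‖h‖))) zz ≤ 0 := by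
      intro zz hzz
      have hzzcl : zz ∈ closure D := frontier_subset_closure hzz
      have hzznot : zz ∉ D := by
        rw [hDopen.frontier_eq] at hzz
        exact hzz.2
      have hzzΩcl : zz ∈ closure Ω := hclD hzzcl
      have hzzhcl : zz + h ∈ closure Ω := hclD2 zz hzzcl
      simp only
      rcases hclosUnion zz hzzΩcl with hzzΩ | hzzfr
      · -- zz ∈ Ω, so zz + h ∉ Ω hence on the frontier
        have hzzh : zz + h ∉ Ω := by
          intro hmem
          exact hzznot (by rw [hDdef]; exact ⟨hzzΩ, hmem⟩)
        have hzzhfr : zz + h ∈ frontier Ω := by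
          rcases hclosUnion (zz + h) hzzhcl with h' | h'
          · exact absurd h' hzzh
          · exact h'
        rw [hbd _ hzzhfr]
        have h1 : 0 ≤ U zz := hU0 zz hzzΩcl
        have h2 : 0 ≤ d * ‖h‖ := mul_nonneg hd0 (norm_nonneg h)
        linarith
      · -- zz on the frontier of Ω : barrier estimate
        have h1 : U (zz + h) ≤ d * ‖h‖ := hbar zz hzzfr h hzzhcl
        have h2 : 0 ≤ U zz := hU0 zz hzzΩcl
        linarith
    have hvmain : ∀ y ∈ D,
        (fun y => (U (y + h) + (-(U y))) + (-(d * ‖h‖))) y ≤ 0 := by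
      refine maxp hn hDb hDopen ?_ ?_ ?_ hvfr
      · refine ContinuousOn.add (ContinuousOn.add htrcont ?_) continuousOn_const
        exact (hUc.mono hclD).neg
      · refine ContDiffOn.add (ContDiffOn.add htrC2 ?_) contDiffOn_const
        exact (hU2.mono hDsub).neg
      · intro y hy
        rw [lap_add_const (fun y => U (y + h) + (-(U y))) (-(d * ‖h‖)),
          lap_add hDopen htrC2 ((hU2.mono hDsub).neg) hy,
          lap_translate ho hU2 (hDsub2 y hy), lap_neg, hlap _ (hDsub2 y hy), hlap _ (hDsub hy)]
        norm_num
    have := hvmain x hxD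
    simp only at this
    linarith
  -- Step 4 : conclude the gradient bound
  have hdiffX : DifferentiableAt ℝ U X :=
    (hU2.contDiffAt (ho.mem_nhds hX)).differentiableAt (by norm_num)
  obtain ⟨g, hgdef⟩ : ∃ g, g = gradient U X := ⟨_, rfl⟩
  rw [← hgdef]
  by_cases hg0 : g = 0
  · rw [hg0]; simpa using hd0
  have hgnorm : (0:ℝ) < ‖g‖ := norm_pos_iff.mpr hg0
  obtain ⟨e, hedef⟩ : ∃ e : EuclideanSpace ℝ (Fin n), e = ‖g‖⁻¹ • g := ⟨_, rfl⟩
  have hfde : fderiv ℝ U X e = ‖g‖ := by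
    have h1 : HasGradientAt U (gradient U X) X := hdiffX.hasGradientAt
    rw [hasGradientAt_iff_hasFDerivAt] at h1
    rw [h1.fderiv]
    have : ((InnerProductSpace.toDual ℝ (EuclideanSpace ℝ (Fin n))) (gradient U X)) e
        = ⟪gradient U X, e⟫_ℝ := rfl
    rw [this, ← hgdef, hedef, real_inner_smul_right, real_inner_self_eq_norm_sq]
    field_simp
  have hder : HasDerivAt (fun t : ℝ => U (X + t • e)) ‖g‖ 0 := by
    have := line_hasDerivAt (v := U) (x := X) (w := e) (t := 0) (by simpa using hdiffX)
    rw [show X + (0:ℝ) • e = X by simp] at this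
    rw [← hfde]
    exact this
  have hslope : Filter.Tendsto (fun t => (U (X + t • e) - U X) / t) (nhdsWithin 0 (Set.Ioi 0))
      (nhds ‖g‖) := by
    have h1 := hasDerivAt_iff_tendsto_slope.mp hder
    have hsub : Set.Ioi (0:ℝ) ⊆ {(0:ℝ)}ᶜ := fun t ht => ne_of_gt ht
    have h2 := h1.mono_left (nhdsWithin_mono _ hsub)
    refine h2.congr' ?_
    filter_upwards [self_mem_nhdsWithin] with t ht
    rw [slope_def_field]
    simp
  have hbound : ∀ᶠ t in nhdsWithin (0:ℝ) (Set.Ioi 0), (U (X + t • e) - U X) / t ≤ d := by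
    have hline : Filter.Tendsto (fun t : ℝ => X + t • e) (nhds 0) (nhds X) := by
      have hcont : Continuous (fun t : ℝ => X + t • e) := by continuity
      simpa using hcont.tendsto 0
    have hev : ∀ᶠ t in nhds (0:ℝ), X + t • e ∈ Ω := hline.eventually (ho.mem_nhds hX)
    filter_upwards [nhdsWithin_le_nhds hev, self_mem_nhdsWithin] with t htΩ htpos
    have htpos' : (0:ℝ) < t := htpos
    have h1 := htrans (t • e) X hX (by simpa using htΩ)
    have h2 : ‖t • e‖ = t := by
      rw [norm_smul, hedef, norm_smul]
      simp [abs_of_pos htpos', abs_of_nonneg (inv_nonneg.mpr (le_of_lt hgnorm)),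
        inv_mul_cancel₀ (ne_of_gt hgnorm)]
    rw [h2] at h1
    rw [div_le_iff₀ htpos']
    have : X + t • e = X + t • e := rfl
    calc U (X + t • e) - U X ≤ d * t := by simpa using h1
      _ = d * t := rfl
  have : ‖g‖ ≤ d := le_of_tendsto hslope hbound
  exact this
end

section
/- With the same hypotheses (Ω of class C²₊, U the torsion function with ΔU = -2, F the inverse Gauss map, κ the Gauss curvature, c_{ij} the cofactor matrix of (h_{ij} + h δ_{ij})), the normal-normal component of the Hessian satisfies (∇²U(F(ξ)) ξ)·ξ = κ·|∇U(F(ξ))|·Σ_i c_{ii}(ξ) - 2 for every ξ ∈ S^(n-1). -/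
open scoped InnerProductSpace

lemma aux_trace {ι κ : Type*} [Fintype ι] [Fintype κ] {V : Type*} [NormedAddCommGroup V]
    [InnerProductSpace ℝ V] (b : OrthonormalBasis ι ℝ V) (c : OrthonormalBasis κ ℝ V)
    (B : V →L[ℝ] V →L[ℝ] ℝ) :
    ∑ i, B (b i) (b i) = ∑ j, B (c j) (c j) := by
  classical
  have key : ∀ x : V, B x x = ∑ j, ∑ k, ⟪c j, x⟫_ℝ * ⟪c k, x⟫_ℝ * B (c j) (c k) := by
    intro x
    conv_lhs => rw [← c.sum_repr' x]
    simp only [map_sum, map_smul, ContinuousLinearMap.sum_apply, ContinuousLinearMap.smul_apply,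
      smul_eq_mul]
    rw [Finset.sum_comm]
    refine Finset.sum_congr rfl fun j _ => ?_
    rw [Finset.mul_sum]
    exact Finset.sum_congr rfl fun k _ => by ring
  calc ∑ i, B (b i) (b i) = ∑ i, ∑ j, ∑ k, ⟪c j, b i⟫_ℝ * ⟪c k, b i⟫_ℝ * B (c j) (c k) := by
        exact Finset.sum_congr rfl fun i _ => key (b i)
    _ = ∑ j, ∑ k, (∑ i, ⟪c j, b i⟫_ℝ * ⟪b i, c k⟫_ℝ) * B (c j) (c k) := by
        rw [Finset.sum_comm]
        refine Finset.sum_congr rfl fun j _ => ?_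
        rw [Finset.sum_comm]
        refine Finset.sum_congr rfl fun k _ => ?_
        rw [Finset.sum_mul]
        refine Finset.sum_congr rfl fun i _ => ?_
        rw [real_inner_comm (b i) (c k)]
    _ = ∑ j, ∑ k, (if j = k then (1:ℝ) else 0) * B (c j) (c k) := by
        refine Finset.sum_congr rfl fun j _ => Finset.sum_congr rfl fun k _ => ?_
        rw [b.sum_inner_mul_inner, orthonormal_iff_ite.mp c.orthonormal]
    _ = ∑ j, B (c j) (c j) := by
        refine Finset.sum_congr rfl fun j _ => ?_
        simp

lemma aux_snd_nonneg {V : Type*} [NormedAddCommGroup V] [NormedSpace ℝ V]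
    {U : V → ℝ} (hU : ContDiff ℝ 2 U) {x : V} (hmin : IsLocalMin U x) (v : V) :
    0 ≤ fderiv ℝ (fderiv ℝ U) x v v := by
  by_contra hneg
  push_neg at hneg
  have hN1 : ContDiff ℝ 1 (fderiv ℝ U) := hU.fderiv_right (le_refl _)
  have hNd : Differentiable ℝ (fderiv ℝ U) := hN1.differentiable one_ne_zero
  have hUd : Differentiable ℝ U := hU.differentiable two_ne_zero
  set L : ℝ → V := fun t => x + t • v with hLdef
  have hLd : ∀ t, HasDerivAt L v t := fun t => by
    have h5 := ((hasDerivAt_id t).smul_const v).const_add x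
    rw [one_smul] at h5
    exact h5
  have hLc : Continuous L := by fun_prop
  have hL0 : L 0 = x := by simp [hLdef]
  set g : ℝ → ℝ := fun t => U (L t) with hgdef
  set g' : ℝ → ℝ := fun t => fderiv ℝ U (L t) v with hg'def
  have hg : ∀ t, HasDerivAt g (g' t) t := fun t =>
    ((hUd (L t)).hasFDerivAt).comp_hasDerivAt t (hLd t)
  set q : ℝ → ℝ := fun t => fderiv ℝ (fderiv ℝ U) (L t) v v with hqdef
  have hg' : ∀ t, HasDerivAt g' (q t) t := by
    intro t
    have h1 : HasFDerivAt (fun w => fderiv ℝ U w v)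
        ((fderiv ℝ (fderiv ℝ U) (L t)).flip v) (L t) := by
      have := ((hNd (L t)).hasFDerivAt).clm_apply (hasFDerivAt_const v (L t))
      simpa using this
    exact h1.comp_hasDerivAt t (hLd t)
  have hqc : Continuous q := by
    have h2 : Continuous (fderiv ℝ (fderiv ℝ U)) := hN1.continuous_fderiv one_ne_zero
    exact ((h2.comp hLc).clm_apply continuous_const).clm_apply continuous_const
  have hgm : IsLocalMin g 0 := by
    have : Filter.Tendsto L (nhds 0) (nhds x) := by
      rw [← hL0]; exact hLc.continuousAt
    exact IsMinFilter.comp_tendsto (by rwa [hL0]) this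
  have hg'0 : g' 0 = 0 := by
    have h3 := hgm.deriv_eq_zero
    rwa [(hg 0).deriv] at h3
  have hq0 : q 0 < 0 := by simpa [hqdef, hL0] using hneg
  have hev : ∀ᶠ t in nhds (0:ℝ), q t < 0 ∧ g 0 ≤ g t :=
    (hqc.continuousAt.eventually_lt_const hq0).and hgm
  obtain ⟨δ, hδpos, hδ⟩ := Metric.eventually_nhds_iff.mp hev
  -- g' is positive on (-δ, 0)
  have hg'c : Continuous g' := continuous_iff_continuousAt.mpr fun t => (hg' t).continuousAt
  have hanti : StrictAntiOn g' (Metric.ball (0:ℝ) δ) := by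
    refine strictAntiOn_of_deriv_neg (convex_ball 0 δ) hg'c.continuousOn ?_
    intro t ht
    rw [interior_eq_iff_isOpen.mpr Metric.isOpen_ball] at ht
    rw [(hg' t).deriv]
    exact (hδ (by simpa using ht)).1
  have hg'pos : ∀ t, -δ/2 ≤ t → t < 0 → 0 < g' t := by
    intro t ht1 ht2
    have h4 : g' 0 < g' t := by
      refine hanti ?_ ?_ ht2
      · rw [Metric.mem_ball, Real.dist_eq, sub_zero, abs_lt]
        constructor <;> linarith
      · simpa using hδpos
    linarith [hg'0]
  have hmono : StrictMonoOn g (Set.Icc (-δ/2) 0) := by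
    refine strictMonoOn_of_deriv_pos (convex_Icc _ _) ?_ ?_
    · exact (continuous_iff_continuousAt.mpr fun t => (hg t).continuousAt).continuousOn
    · intro t ht
      rw [interior_Icc] at ht
      rw [(hg t).deriv]
      exact hg'pos t ht.1.le ht.2
  have hlt : g (-δ/2) < g 0 := by
    refine hmono ⟨le_refl _, by linarith⟩ ⟨by linarith, le_refl _⟩ (by linarith)
  have := (hδ (y := -δ/2) (by rw [Real.dist_eq]; rw [abs_lt]; constructor <;> linarith)).2
  linarith

lemma aux_lap_eq {n : ℕ} {U : EuclideanSpace ℝ (Fin n) → ℝ} (hU : ContDiff ℝ 2 U)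
    (x : EuclideanSpace ℝ (Fin n)) :
    lap U x = ∑ i, fderiv ℝ (fderiv ℝ U) x (EuclideanSpace.single i 1)
      (EuclideanSpace.single i 1) := by
  unfold lap
  refine Finset.sum_congr rfl fun i _ => ?_
  have hNd : DifferentiableAt ℝ (fderiv ℝ U) x :=
    ((hU.fderiv_right (le_refl _)).differentiable one_ne_zero) x
  rw [fderiv_clm_apply hNd (differentiableAt_const _)]
  simp

lemma aux_lap_cont {n : ℕ} {U : EuclideanSpace ℝ (Fin n) → ℝ} (hU : ContDiff ℝ 2 U) :
    Continuous (lap U) := by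
  have : Continuous (fderiv ℝ (fderiv ℝ U)) :=
    (hU.fderiv_right (le_refl _)).continuous_fderiv one_ne_zero
  have h2 : Continuous fun x => ∑ i, fderiv ℝ (fderiv ℝ U) x (EuclideanSpace.single i 1)
      (EuclideanSpace.single i 1) :=
    continuous_finset_sum _ fun i _ =>
      (this.clm_apply continuous_const).clm_apply continuous_const
  have h3 : lap U = fun x => ∑ i, fderiv ℝ (fderiv ℝ U) x (EuclideanSpace.single i 1)
      (EuclideanSpace.single i 1) := funext fun x => aux_lap_eq hU x
  rw [h3]; exact h2

lemma aux_nonneg {n : ℕ} {Ω : Set (EuclideanSpace ℝ (Fin n))} (hΩc : IsCompact Ω)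
    {U : EuclideanSpace ℝ (Fin n) → ℝ} (hUsm : ContDiff ℝ 2 U)
    (hlap : ∀ x ∈ interior Ω, lap U x = -2) (hbd : ∀ x ∈ frontier Ω, U x = 0) :
    ∀ x ∈ Ω, 0 ≤ U x := by
  rcases Ω.eq_empty_or_nonempty with hne | hne
  · intro x hx; rw [hne] at hx; exact absurd hx (Set.notMem_empty x)
  obtain ⟨x0, hx0, hmin⟩ := hΩc.exists_isMinOn hne hUsm.continuous.continuousOn
  intro x hx
  have hle : U x0 ≤ U x := (isMinOn_iff.mp hmin) x hx
  by_contra hlt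
  push_neg at hlt
  have hx0neg : U x0 < 0 := lt_of_le_of_lt hle hlt
  have hx0i : x0 ∈ interior Ω := by
    by_contra hni
    have hfr : x0 ∈ frontier Ω := by
      rw [frontier, hΩc.isClosed.closure_eq]
      exact ⟨hx0, hni⟩
    rw [hbd x0 hfr] at hx0neg
    linarith
  have hloc : IsLocalMin U x0 :=
    Filter.eventually_of_mem (mem_interior_iff_mem_nhds.mp hx0i) fun y hy =>
      (isMinOn_iff.mp hmin) y hy
  have hge : 0 ≤ lap U x0 := by
    rw [aux_lap_eq hUsm]
    exact Finset.sum_nonneg fun i _ => aux_snd_nonneg hUsm hloc _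
  rw [hlap x0 hx0i] at hge
  linarith

lemma aux_grad {n : ℕ} {Ω : Set (EuclideanSpace ℝ (Fin n))} (hΩc : IsCompact Ω)
    {h : EuclideanSpace ℝ (Fin n) → ℝ}
    (hsupp : ∀ x, h x = sSup ((fun y => ⟪x, y⟫_ℝ) '' Ω))
    (hsm : ContDiffOn ℝ 2 h {x | x ≠ 0})
    {x : EuclideanSpace ℝ (Fin n)} (hx : x ≠ 0)
    {y : EuclideanSpace ℝ (Fin n)} (hy : y ∈ Ω)
    (hmax : ∀ z ∈ Ω, ⟪x, z⟫_ℝ ≤ ⟪x, y⟫_ℝ) :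
    gradient h x = y := by
  have hdiff : DifferentiableAt ℝ h x :=
    (hsm.contDiffAt (isOpen_ne.mem_nhds hx)).differentiableAt two_ne_zero
  set φ : EuclideanSpace ℝ (Fin n) → ℝ := fun z => h z - (innerSL ℝ y) z with hφdef
  have hφ0 : φ x = 0 := by
    have : h x = ⟪x, y⟫_ℝ := by
      rw [hsupp x]
      refine IsGreatest.csSup_eq ⟨⟨y, hy, rfl⟩, ?_⟩
      rintro a ⟨w, hw, rfl⟩
      exact hmax w hw
    simp only [hφdef, innerSL_apply_apply, this, sub_eq_zero]
    exact real_inner_comm y x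
  have hφnn : ∀ z, 0 ≤ φ z := by
    intro z
    have h1 : ⟪z, y⟫_ℝ ≤ h z := by
      rw [hsupp z]
      refine le_csSup ?_ ⟨y, hy, rfl⟩
      exact (hΩc.image (continuous_const.inner continuous_id)).bddAbove
    simp only [hφdef, innerSL_apply_apply, sub_nonneg]
    rwa [real_inner_comm]
  have hφmin : IsLocalMin φ x :=
    Filter.Eventually.of_forall fun z => by rw [hφ0]; exact hφnn z
  have hφd : fderiv ℝ φ x = 0 := hφmin.fderiv_eq_zero
  have h2 : fderiv ℝ φ x = fderiv ℝ h x - innerSL ℝ y := by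
    rw [hφdef]
    rw [fderiv_fun_sub hdiff (innerSL ℝ y).differentiableAt, (innerSL ℝ y).fderiv]
  have h3 : fderiv ℝ h x = innerSL ℝ y := by
    rw [h2] at hφd
    exact sub_eq_zero.mp hφd
  show (InnerProductSpace.toDual ℝ _).symm (fderiv ℝ h x) = y
  rw [h3]
  have h4 : InnerProductSpace.toDual ℝ (EuclideanSpace ℝ (Fin n)) y = innerSL ℝ y := by
    ext v; simp [InnerProductSpace.toDual_apply_apply]
  rw [← h4, LinearIsometryEquiv.symm_apply_apply]

set_option maxHeartbeats 1000000 in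
/-- Lemma 3.2 (ii): normal-normal component of the Hessian of the torsion function:
`(∇²U(F(ξ)) ξ) · ξ = κ |∇U(F(ξ))| Σ_i c_{ii}(ξ) - 2`, where `κ = (det W)⁻¹` is the Gauss
curvature and `c = adjugate W` the cofactor matrix of the reverse Weingarten matrix
`W = (h_{ij} + h δ_{ij})`. -/
theorem stmt_9 (n : ℕ) (Ω : Set (EuclideanSpace ℝ (Fin n)))
    (hΩc : IsCompact Ω) (hΩconv : Convex ℝ Ω) (hΩint : (interior Ω).Nonempty)
    (h : EuclideanSpace ℝ (Fin n) → ℝ)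
    (hsupp : ∀ x, h x = sSup ((fun y => ⟪x, y⟫_ℝ) '' Ω))
    -- `Ω` of class `C²₊`: `h` is `C²` away from the origin,
    (hsm : ContDiffOn ℝ 2 h {x | x ≠ 0})
    (F : EuclideanSpace ℝ (Fin n) → EuclideanSpace ℝ (Fin n))
    -- `F` is the inverse Gauss map: `F x` is the boundary point with outer normal `x`:
    (hFmax : ∀ x, ‖x‖ = 1 → F x ∈ frontier Ω ∧ ∀ y ∈ Ω, ⟪x, y⟫_ℝ ≤ ⟪x, F x⟫_ℝ)
    (U : EuclideanSpace ℝ (Fin n) → ℝ)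
    -- `U ∈ C²(closure Ω)` solves the torsion problem:
    (hUsm : ContDiff ℝ 2 U)
    (hlap : ∀ x ∈ interior Ω, lap U x = -2)
    (hbd : ∀ x ∈ frontier Ω, U x = 0)
    (ξ : EuclideanSpace ℝ (Fin n)) (hξ : ‖ξ‖ = 1)
    -- a local orthonormal frame of the tangent space at `ξ`:
    (e : Fin (n - 1) → EuclideanSpace ℝ (Fin n)) (he : Orthonormal ℝ e)
    (heξ : ∀ i, ⟪e i, ξ⟫_ℝ = 0)
    -- the reverse Weingarten matrix `(h_{ij} + h δ_{ij})`:
    (W : Matrix (Fin (n - 1)) (Fin (n - 1)) ℝ)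
    (hW : ∀ i j, W i j = iteratedFDeriv ℝ 2 h ξ ![e i, e j])
    -- `W` is positive definite (positive Gauss curvature):
    (hWpos : W.PosDef) :
    iteratedFDeriv ℝ 2 U (F ξ) ![ξ, ξ] =
      W.det⁻¹ * ‖gradient U (F ξ)‖ * (∑ i, W.adjugate i i) - 2 := by
    classical
  have hξ0 : ξ ≠ 0 := by intro hc; rw [hc, norm_zero] at hξ; norm_num at hξ
  have hop : IsOpen {x : EuclideanSpace ℝ (Fin n) | x ≠ 0} := isOpen_ne
  have hΩcl : IsClosed Ω := hΩc.isClosed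
  have hfr : frontier Ω ⊆ Ω := hΩcl.frontier_subset
  have hΩne : Ω.Nonempty := hΩint.mono interior_subset
  set G : EuclideanSpace ℝ (Fin n) → EuclideanSpace ℝ (Fin n) := fun x => gradient h x
    with hGdef
  -- G x is the unique maximizer
  have hmaxG : ∀ x : EuclideanSpace ℝ (Fin n), x ≠ 0 →
      G x ∈ Ω ∧ ∀ z ∈ Ω, ⟪x, z⟫_ℝ ≤ ⟪x, G x⟫_ℝ := by
    intro x hx
    have hcont : Continuous (fun z : EuclideanSpace ℝ (Fin n) => ⟪x, z⟫_ℝ) :=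
      continuous_const.inner continuous_id
    obtain ⟨y, hy, hmax⟩ := hΩc.exists_isMaxOn hΩne hcont.continuousOn
    have hGx : G x = y := aux_grad hΩc hsupp hsm hx hy (isMaxOn_iff.mp hmax)
    rw [hGx]
    exact ⟨hy, isMaxOn_iff.mp hmax⟩
  have hGfr : ∀ x : EuclideanSpace ℝ (Fin n), x ≠ 0 → G x ∈ frontier Ω := by
    intro x hx
    obtain ⟨hGΩ, hGmax⟩ := hmaxG x hx
    have hni : G x ∉ interior Ω := by
      intro hi
      obtain ⟨ε, hε, hball⟩ := Metric.mem_nhds_iff.mp (mem_interior_iff_mem_nhds.mp hi)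
      have hxpos : 0 < ‖x‖ := norm_pos_iff.mpr hx
      set δ : ℝ := ε / (2 * ‖x‖) with hδdef
      have hδpos : 0 < δ := by positivity
      have hmem : G x + δ • x ∈ Ω := by
        apply hball
        rw [Metric.mem_ball, dist_eq_norm]
        have : G x + δ • x - G x = δ • x := by abel
        rw [this, norm_smul, Real.norm_eq_abs, abs_of_pos hδpos, hδdef]
        rw [div_mul_eq_mul_div, div_lt_iff₀ (by positivity)]
        nlinarith
      have := hGmax _ hmem
      rw [inner_add_right, real_inner_smul_right] at this
      have hx2 : 0 < ⟪x, x⟫_ℝ := by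
        rw [real_inner_self_eq_norm_mul_norm]; positivity
      nlinarith
    rw [frontier, hΩcl.closure_eq]
    exact ⟨hGΩ, hni⟩
  have hUG0 : ∀ x : EuclideanSpace ℝ (Fin n), x ≠ 0 → U (G x) = 0 := fun x hx =>
    hbd _ (hGfr x hx)
  have hFξΩ : F ξ ∈ Ω := hfr (hFmax ξ hξ).1
  have hGF : G ξ = F ξ := aux_grad hΩc hsupp hsm hξ0 hFξΩ (hFmax ξ hξ).2
  have hGhom : ∀ (x : EuclideanSpace ℝ (Fin n)), x ≠ 0 → ∀ t : ℝ, 0 < t →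
      G (t • x) = G x := by
    intro x hx t ht
    have htx : t • x ≠ 0 := smul_ne_zero (ne_of_gt ht) hx
    obtain ⟨hGΩ, hGmax⟩ := hmaxG x hx
    refine aux_grad hΩc hsupp hsm htx hGΩ ?_
    intro z hz
    rw [inner_smul_left, inner_smul_left]
    simp only [RCLike.star_def, starRingEnd_apply, star_trivial]
    exact mul_le_mul_of_nonneg_left (hGmax z hz) (le_of_lt ht)
  -- smoothness of G
  have hDh1 : ContDiffOn ℝ 1 (fderiv ℝ h) {x : EuclideanSpace ℝ (Fin n) | x ≠ 0} :=
    hsm.fderiv_of_isOpen hop (by norm_num)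
  set T := (InnerProductSpace.toDual ℝ (EuclideanSpace ℝ (Fin n))).symm with hTdef
  have hGc1 : ContDiffOn ℝ 1 G {x : EuclideanSpace ℝ (Fin n) | x ≠ 0} :=
    T.contDiff.comp_contDiffOn hDh1
  have hGdiffAt : ∀ x : EuclideanSpace ℝ (Fin n), x ≠ 0 → DifferentiableAt ℝ G x := by
    intro x hx
    exact (hGc1.contDiffAt (hop.mem_nhds hx)).differentiableAt one_ne_zero
  have hDhAt : ∀ x : EuclideanSpace ℝ (Fin n), x ≠ 0 →
      DifferentiableAt ℝ (fderiv ℝ h) x := by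
    intro x hx
    exact (hDh1.contDiffAt (hop.mem_nhds hx)).differentiableAt one_ne_zero
  have hAinner : ∀ x : EuclideanSpace ℝ (Fin n), x ≠ 0 → ∀ u v,
      ⟪fderiv ℝ G x u, v⟫_ℝ = fderiv ℝ (fderiv ℝ h) x u v := by
    intro x hx u v
    have h1 : HasFDerivAt G
        ((T.toContinuousLinearEquiv.toContinuousLinearMap).comp
          (fderiv ℝ (fderiv ℝ h) x)) x :=
      (T.toContinuousLinearEquiv.toContinuousLinearMap.hasFDerivAt).comp x
        (hDhAt x hx).hasFDerivAt
    rw [h1.fderiv]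
    simp only [ContinuousLinearMap.coe_comp', Function.comp_apply,
      ContinuousLinearEquiv.coe_coe, LinearIsometryEquiv.coe_toContinuousLinearEquiv]
    exact InnerProductSpace.toDual_symm_apply
  have hsymm : ∀ x : EuclideanSpace ℝ (Fin n), x ≠ 0 → ∀ u v,
      fderiv ℝ (fderiv ℝ h) x u v = fderiv ℝ (fderiv ℝ h) x v u := by
    intro x hx
    exact (hsm.contDiffAt (hop.mem_nhds hx)).isSymmSndFDerivAt (by simp)
  have hsw : ∀ x : EuclideanSpace ℝ (Fin n), x ≠ 0 → ∀ u v,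
      ⟪fderiv ℝ G x u, v⟫_ℝ = ⟪u, fderiv ℝ G x v⟫_ℝ := by
    intro x hx u v
    rw [hAinner x hx, hsymm x hx, ← hAinner x hx, real_inner_comm]
  have hAx : ∀ x : EuclideanSpace ℝ (Fin n), x ≠ 0 → fderiv ℝ G x x = 0 := by
    intro x hx
    set γ : ℝ → EuclideanSpace ℝ (Fin n) := fun t => (1 + t) • x with hγdef
    have hγ0 : γ 0 = x := by simp [hγdef]
    have hγd : HasDerivAt γ x 0 := by
      have h1 : HasDerivAt (fun t : ℝ => 1 + t) 1 0 := by
        simpa using (hasDerivAt_id (0:ℝ)).const_add 1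
      simpa using h1.smul_const x
    have hev : (fun t => G (γ t)) =ᶠ[nhds (0:ℝ)] fun _ => G x := by
      have hpos : ∀ᶠ t : ℝ in nhds 0, 0 < 1 + t := by
        filter_upwards [Metric.ball_mem_nhds (0:ℝ) one_pos] with t ht
        rw [Metric.mem_ball, Real.dist_eq, sub_zero] at ht
        have := abs_lt.mp ht
        linarith [this.1]
      filter_upwards [hpos] with t ht
      exact hGhom x hx (1 + t) ht
    have h2 : HasDerivAt (fun t => G (γ t)) (fderiv ℝ G (γ 0) x) 0 :=
      (hGdiffAt (γ 0) (by rw [hγ0]; exact hx)).hasFDerivAt.comp_hasDerivAt 0 hγd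
    have h3 : HasDerivAt (fun t => G (γ t)) 0 0 :=
      (hasDerivAt_const (0:ℝ) (G x)).congr_of_eventuallyEq hev
    have := h2.unique h3
    rwa [hγ0] at this
  have hUdiff : Differentiable ℝ U := hUsm.differentiable two_ne_zero
  have hgradU : ∀ w v : EuclideanSpace ℝ (Fin n),
      ⟪gradient U w, v⟫_ℝ = fderiv ℝ U w v := fun w v =>
    InnerProductSpace.toDual_symm_apply
  have hker : ∀ x : EuclideanSpace ℝ (Fin n), x ≠ 0 →
      fderiv ℝ G x (gradient U (G x)) = 0 := by
    intro x hx
    have hzero : fderiv ℝ (fun y => U (G y)) x = 0 := by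
      have hev : (fun y => U (G y)) =ᶠ[nhds x] fun _ => (0:ℝ) :=
        Filter.eventually_of_mem (hop.mem_nhds hx) fun z hz => hUG0 z hz
      rw [hev.fderiv_eq]
      exact fderiv_const_apply 0
    have hchain : fderiv ℝ (fun y => U (G y)) x =
        (fderiv ℝ U (G x)).comp (fderiv ℝ G x) :=
      fderiv_comp x (hUdiff (G x)) (hGdiffAt x hx)
    have hall : ∀ v, ⟪gradient U (G x), fderiv ℝ G x v⟫_ℝ = 0 := by
      intro v
      rw [hgradU]
      have := congrArg (fun L : EuclideanSpace ℝ (Fin n) →L[ℝ] ℝ => L v)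
        (hzero.symm.trans hchain)
      simpa using this.symm
    have h5 : ⟪fderiv ℝ G x (gradient U (G x)), fderiv ℝ G x (gradient U (G x))⟫_ℝ = 0 := by
      rw [hsw x hx]
      exact hall _
    exact inner_self_eq_zero.mp h5
  -- dimension and orthonormal basis
  have hn : 0 < n := by
    rcases Nat.eq_zero_or_pos n with h0 | h0
    · exfalso
      apply hξ0
      subst h0
      exact Subsingleton.elim ξ 0
    · exact h0
  set v : Option (Fin (n - 1)) → EuclideanSpace ℝ (Fin n) :=
    fun o => o.elim ξ e with hvdef
  have hon : Orthonormal ℝ v := by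
    rw [orthonormal_iff_ite]
    rintro (_ | i) (_ | j)
    · simp only [hvdef, Option.elim]
      rw [real_inner_self_eq_norm_mul_norm, hξ]
      norm_num
    · simp only [hvdef, Option.elim]
      rw [real_inner_comm, heξ j]
      simp
    · simp only [hvdef, Option.elim]
      rw [heξ i]
      simp
    · simp only [hvdef, Option.elim]
      rw [orthonormal_iff_ite.mp he i j]
      simp [Option.some_inj]
  have hcard : Fintype.card (Option (Fin (n - 1))) =
      Module.finrank ℝ (EuclideanSpace ℝ (Fin n)) := by
    rw [Fintype.card_option, Fintype.card_fin, finrank_euclideanSpace_fin]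
    omega
  have hspan : ⊤ ≤ Submodule.span ℝ (Set.range v) := by
    rw [← coe_basisOfLinearIndependentOfCardEqFinrank hon.linearIndependent hcard]
    exact le_of_eq
      (basisOfLinearIndependentOfCardEqFinrank hon.linearIndependent hcard).span_eq.symm
  set B0 : OrthonormalBasis (Option (Fin (n - 1))) ℝ (EuclideanSpace ℝ (Fin n)) :=
    OrthonormalBasis.mk hon hspan with hB0def
  have hB0 : ⇑B0 = v := OrthonormalBasis.coe_mk hon hspan
  have hexp : ∀ w : EuclideanSpace ℝ (Fin n),
      (∑ i, ⟪e i, w⟫_ℝ • e i) + ⟪ξ, w⟫_ℝ • ξ = w := by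
    intro w
    have h1 := B0.sum_repr' w
    rw [Fintype.sum_option] at h1
    simp only [hB0, hvdef, Option.elim] at h1
    rw [add_comm] at h1
    exact h1
  -- value of the Laplacian at the boundary point
  have hlapF : lap U (F ξ) = -2 := by
    obtain ⟨z, hz⟩ := hΩint
    have htend : Filter.Tendsto (fun t : ℝ => F ξ + t • (z - F ξ))
        (nhdsWithin 0 (Set.Ioi 0)) (nhds (F ξ)) := by
      have hc : Continuous (fun t : ℝ => F ξ + t • (z - F ξ)) := by fun_prop
      have h2 := hc.tendsto 0
      simp only [zero_smul, add_zero] at h2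
      exact h2.mono_left nhdsWithin_le_nhds
    have h2 : Filter.Tendsto (fun t : ℝ => lap U (F ξ + t • (z - F ξ)))
        (nhdsWithin 0 (Set.Ioi 0)) (nhds (lap U (F ξ))) :=
      ((aux_lap_cont hUsm).continuousAt).tendsto.comp htend
    have h3 : ∀ᶠ t in nhdsWithin (0:ℝ) (Set.Ioi 0),
        lap U (F ξ + t • (z - F ξ)) = -2 := by
      filter_upwards [Ioo_mem_nhdsGT (one_pos : (0:ℝ) < 1)] with t ht
      exact hlap _ (hΩconv.add_smul_sub_mem_interior (hfr (hFmax ξ hξ).1) hz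
        ⟨ht.1, le_of_lt ht.2⟩)
    exact tendsto_nhds_unique (h2.congr' (h3.mono fun t ht => ht)) tendsto_const_nhds
  -- trace identity
  have htrace : fderiv ℝ (fderiv ℝ U) (F ξ) ξ ξ +
      ∑ i, fderiv ℝ (fderiv ℝ U) (F ξ) (e i) (e i) = -2 := by
    rw [← hlapF, aux_lap_eq hUsm]
    have h1 := aux_trace (EuclideanSpace.basisFun (Fin n) ℝ) B0
      (fderiv ℝ (fderiv ℝ U) (F ξ))
    simp only [EuclideanSpace.basisFun_apply] at h1
    rw [h1, Fintype.sum_option]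
    simp only [hB0, hvdef, Option.elim]
  -- the gradient field along the boundary
  set p : EuclideanSpace ℝ (Fin n) → EuclideanSpace ℝ (Fin n) :=
    fun x => gradient U (G x) with hpdef
  set cc : EuclideanSpace ℝ (Fin n) → ℝ := fun x => ⟪p x, x⟫_ℝ / ⟪x, x⟫_ℝ with hccdef
  set r : EuclideanSpace ℝ (Fin n) → EuclideanSpace ℝ (Fin n) :=
    fun x => p x - cc x • x with hrdef
  set M : EuclideanSpace ℝ (Fin n) → Matrix (Fin (n-1)) (Fin (n-1)) ℝ := fun x =>
    Matrix.of fun i j => ⟪fderiv ℝ G x (e i), e j⟫_ℝ -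
      (⟪e i, x⟫_ℝ / ⟪ξ, x⟫_ℝ) * ⟪fderiv ℝ G x ξ, e j⟫_ℝ with hMdef
  have hξinner : ⟪ξ, ξ⟫_ℝ = 1 := by
    rw [real_inner_self_eq_norm_mul_norm, hξ]; norm_num
  have hMξ : M ξ = W := by
    ext i j
    simp only [hMdef, Matrix.of_apply]
    rw [hAx ξ hξ0, hAinner ξ hξ0]
    simp only [inner_zero_left, mul_zero, sub_zero]
    rw [hW i j, iteratedFDeriv_two_apply]
    simp
  have hAcont : ContinuousAt (fun x => fderiv ℝ G x) ξ :=
    (hGc1.continuousOn_fderiv_of_isOpen hop le_rfl).continuousAt (hop.mem_nhds hξ0)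
  have happly : ∀ u : EuclideanSpace ℝ (Fin n),
      ContinuousAt (fun x => fderiv ℝ G x u) ξ := by
    intro u
    exact (isBoundedBilinearMap_apply.continuous.continuousAt).comp
      (hAcont.prodMk continuousAt_const)
  have hMcontAt : ContinuousAt M ξ := by
    apply continuousAt_pi.mpr; intro i; apply continuousAt_pi.mpr; intro j
    simp only [hMdef, Matrix.of_apply]
    refine ContinuousAt.sub ?_ (ContinuousAt.mul (ContinuousAt.div ?_ ?_ ?_) ?_)
    · exact (happly (e i)).inner continuousAt_const
    · exact continuousAt_const.inner continuousAt_id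
    · exact continuousAt_const.inner continuousAt_id
    · rw [hξinner]; norm_num
    · exact (happly ξ).inner continuousAt_const
  have hdetcont : ContinuousAt (fun x => (M x).det) ξ :=
    ((Continuous.matrix_det continuous_id).continuousAt).comp hMcontAt
  have hdetξ : (M ξ).det ≠ 0 := by rw [hMξ]; exact ne_of_gt hWpos.det_pos
  have hinncont : ContinuousAt (fun x : EuclideanSpace ℝ (Fin n) => ⟪ξ, x⟫_ℝ) ξ :=
    continuousAt_const.inner continuousAt_id
  have hr0 : ∀ᶠ x in nhds ξ, r x = 0 := by
    filter_upwards [hop.mem_nhds hξ0, hdetcont.eventually_ne hdetξ,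
      hinncont.eventually_ne (by rw [hξinner]; norm_num : ⟪ξ, ξ⟫_ℝ ≠ (0:ℝ))]
      with x hx0 hdet hinn
    have hx0' : x ≠ 0 := hx0
    have hxinn : ⟪x, x⟫_ℝ ≠ 0 := by
      rw [real_inner_self_eq_norm_mul_norm]
      have : ‖x‖ ≠ 0 := norm_ne_zero_iff.mpr hx0'
      positivity
    have hrxx : ⟪r x, x⟫_ℝ = 0 := by
      show ⟪p x - (⟪p x, x⟫_ℝ / ⟪x, x⟫_ℝ) • x, x⟫_ℝ = 0
      rw [inner_sub_left, real_inner_smul_left, div_mul_cancel₀ _ hxinn, sub_self]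
    have hAr : fderiv ℝ G x (r x) = 0 := by
      have hrx : r x = p x - cc x • x := rfl
      rw [hrx, (fderiv ℝ G x).map_sub, (fderiv ℝ G x).map_smul, hker x hx0',
        hAx x hx0', smul_zero, sub_zero]
    set ρ : Fin (n-1) → ℝ := fun i => ⟪e i, r x⟫_ℝ with hρdef
    set σ : ℝ := ⟪ξ, r x⟫_ℝ with hσdef
    have hrexp : (∑ i, ρ i • e i) + σ • ξ = r x := hexp (r x)
    have hconstraint : (∑ i, ρ i * ⟪e i, x⟫_ℝ) + σ * ⟪ξ, x⟫_ℝ = 0 := by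
      rw [← hrxx]
      conv_rhs => rw [← hrexp]
      rw [inner_add_left, sum_inner]
      simp only [real_inner_smul_left]
    have hvec : Matrix.vecMul ρ (M x) = 0 := by
      funext j
      have hArj : ⟪fderiv ℝ G x (r x), e j⟫_ℝ = 0 := by rw [hAr]; simp
      have hAexp : (∑ i, ρ i * ⟪fderiv ℝ G x (e i), e j⟫_ℝ) +
          σ * ⟪fderiv ℝ G x ξ, e j⟫_ℝ = 0 := by
        rw [← hArj]
        conv_rhs => rw [← hrexp]
        rw [map_add, map_smul, map_sum, inner_add_left, sum_inner]
        simp only [map_smul, real_inner_smul_left]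
      set a : Fin (n-1) → ℝ := fun i => ⟪fderiv ℝ G x (e i), e j⟫_ℝ with hadef
      set b : Fin (n-1) → ℝ := fun i => ⟪e i, x⟫_ℝ with hbdef
      set cξ : ℝ := ⟪fderiv ℝ G x ξ, e j⟫_ℝ with hcξdef
      set d : ℝ := ⟪ξ, x⟫_ℝ with hddef
      have hd : d ≠ 0 := hinn
      show (Matrix.vecMul ρ (M x)) j = 0
      have hMx : ∀ i, M x i j = a i - b i / d * cξ := fun i => rfl
      have h8 : (Matrix.vecMul ρ (M x)) j = ∑ i, ρ i * (a i - b i / d * cξ) := by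
        simp only [Matrix.vecMul, dotProduct]
        exact Finset.sum_congr rfl fun i _ => by rw [hMx i]
      rw [h8]
      have h9 : ∀ i, ρ i * (a i - b i / d * cξ) =
          ρ i * a i - (ρ i * b i) * (cξ / d) := by intro i; ring
      rw [Finset.sum_congr rfl fun i _ => h9 i, Finset.sum_sub_distrib, ← Finset.sum_mul]
      have hS2 : (∑ i, ρ i * b i) = -(σ * d) := by linarith [hconstraint]
      rw [hS2]
      have h10 : -(σ * d) * (cξ / d) = -(σ * cξ) := by
        rw [show -(σ * d) * (cξ / d) = -(σ * (cξ / d * d)) by ring, div_mul_cancel₀ _ hd]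
      rw [h10]
      linarith [hAexp]
    have hρ0 : ρ = 0 := by
      have h7 : ρ = Matrix.vecMul (Matrix.vecMul ρ (M x)) (M x)⁻¹ := by
        rw [Matrix.vecMul_vecMul, Matrix.mul_nonsing_inv _ (isUnit_iff_ne_zero.mpr hdet),
          Matrix.vecMul_one]
      rw [hvec] at h7
      rw [h7]
      simp [Matrix.zero_vecMul]
    have hσ0 : σ = 0 := by
      have := hconstraint
      rw [hρ0] at this
      simp at this
      rcases this with h | h
      · exact h
      · exact absurd h hinn
    rw [← hrexp, hρ0, hσ0]
    simp
  -- the derivative identity at ξ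
  have hrξ : r ξ = 0 := hr0.self_of_nhds
  set c₀ : ℝ := cc ξ with hc₀def
  have hpξ : p ξ = c₀ • ξ := by
    have : p ξ - cc ξ • ξ = 0 := hrξ
    rw [sub_eq_zero] at this
    rw [this]
  have hgradDiff : Differentiable ℝ (fun w => gradient U w) := by
    intro w
    exact T.differentiable.differentiableAt.comp w
      (((hUsm.fderiv_right (le_refl _)).differentiable one_ne_zero) w)
  have hpdiff : DifferentiableAt ℝ p ξ :=
    (hgradDiff (G ξ)).comp ξ (hGdiffAt ξ hξ0)
  have hccdiff : DifferentiableAt ℝ cc ξ := by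
    have h1 : DifferentiableAt ℝ (fun x => ⟪p x, x⟫_ℝ) ξ :=
      hpdiff.inner ℝ differentiableAt_id
    have h2 : DifferentiableAt ℝ
        (fun x : EuclideanSpace ℝ (Fin n) => ⟪x, x⟫_ℝ) ξ :=
      differentiableAt_id.inner ℝ differentiableAt_id
    have hne : ⟪ξ, ξ⟫_ℝ ≠ 0 := by rw [hξinner]; norm_num
    show DifferentiableAt ℝ
      (fun x : EuclideanSpace ℝ (Fin n) => ⟪p x, x⟫_ℝ / ⟪x, x⟫_ℝ) ξ
    simp only [div_eq_mul_inv]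
    exact h1.mul (h2.inv hne)
  have hdr : fderiv ℝ r ξ = 0 := by
    have heq : r =ᶠ[nhds ξ] fun _ => 0 := hr0
    rw [heq.fderiv_eq]
    exact fderiv_const_apply 0
  have hdp : fderiv ℝ p ξ = fderiv ℝ (fun y => cc y • y) ξ := by
    have h1 : fderiv ℝ r ξ = fderiv ℝ p ξ - fderiv ℝ (fun y => cc y • y) ξ := by
      have : r = fun y => p y - cc y • y := rfl
      rw [this]
      exact fderiv_sub hpdiff (hccdiff.smul differentiableAt_id)
    rw [hdr] at h1
    exact (sub_eq_zero.mp h1.symm)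
  have hsmulfd : fderiv ℝ (fun y : EuclideanSpace ℝ (Fin n) => cc y • y) ξ =
      cc ξ • ContinuousLinearMap.id ℝ (EuclideanSpace ℝ (Fin n)) +
        (fderiv ℝ cc ξ).smulRight ξ := by
    have := fderiv_smul (f := fun y : EuclideanSpace ℝ (Fin n) => y) (c := cc)
      hccdiff differentiableAt_id
    rwa [fderiv_id'] at this
  have hident : ∀ u v : EuclideanSpace ℝ (Fin n),
      ⟪fderiv ℝ p ξ u, v⟫_ℝ = c₀ * ⟪u, v⟫_ℝ + (fderiv ℝ cc ξ u) * ⟪ξ, v⟫_ℝ := by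
    intro u v
    rw [hdp, hsmulfd]
    simp only [ContinuousLinearMap.add_apply, ContinuousLinearMap.smul_apply,
      ContinuousLinearMap.coe_id', id_eq, ContinuousLinearMap.smulRight_apply]
    rw [inner_add_left, real_inner_smul_left, real_inner_smul_left]
  -- structure of fderiv p via the chain rule
  have hSinner : ∀ w v' : EuclideanSpace ℝ (Fin n),
      ⟪fderiv ℝ (fun y => gradient U y) (F ξ) w, v'⟫_ℝ =
        fderiv ℝ (fderiv ℝ U) (F ξ) w v' := by
    intro w v'
    have h1 : HasFDerivAt (fun y => gradient U y)
        ((T.toContinuousLinearEquiv.toContinuousLinearMap).comp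
          (fderiv ℝ (fderiv ℝ U) (F ξ))) (F ξ) :=
      (T.toContinuousLinearEquiv.toContinuousLinearMap.hasFDerivAt).comp (F ξ)
        (((hUsm.fderiv_right (le_refl _)).differentiable one_ne_zero) (F ξ)).hasFDerivAt
    rw [h1.fderiv]
    simp only [ContinuousLinearMap.coe_comp', Function.comp_apply,
      ContinuousLinearEquiv.coe_coe, LinearIsometryEquiv.coe_toContinuousLinearEquiv]
    exact InnerProductSpace.toDual_symm_apply
  have hchainp : ∀ u, fderiv ℝ p ξ u =
      fderiv ℝ (fun y => gradient U y) (F ξ) (fderiv ℝ G ξ u) := by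
    intro u
    have h1 : fderiv ℝ p ξ = (fderiv ℝ (fun y => gradient U y) (G ξ)).comp
        (fderiv ℝ G ξ) :=
      fderiv_comp ξ (hgradDiff (G ξ)) (hGdiffAt ξ hξ0)
    rw [h1, hGF]
    rfl
  -- the image of the frame under the reverse Weingarten map
  have hWval : ∀ i k, W i k = fderiv ℝ (fderiv ℝ h) ξ (e i) (e k) := by
    intro i k
    rw [hW i k, iteratedFDeriv_two_apply]
    simp
  have hAei : ∀ i, fderiv ℝ G ξ (e i) = ∑ k, W i k • e k := by
    intro i
    have h1 := hexp (fderiv ℝ G ξ (e i))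
    have h2 : ∀ k, ⟪e k, fderiv ℝ G ξ (e i)⟫_ℝ = W i k := by
      intro k
      rw [real_inner_comm, hAinner ξ hξ0, ← hWval]
    have h3 : ⟪ξ, fderiv ℝ G ξ (e i)⟫_ℝ = 0 := by
      rw [real_inner_comm, hAinner ξ hξ0, hsymm ξ hξ0, ← hAinner ξ hξ0, hAx ξ hξ0]
      exact inner_zero_left _
    calc fderiv ℝ G ξ (e i)
        = (∑ k, ⟪e k, fderiv ℝ G ξ (e i)⟫_ℝ • e k) +
            ⟪ξ, fderiv ℝ G ξ (e i)⟫_ℝ • ξ := h1.symm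
      _ = ∑ k, W i k • e k := by
          rw [h3, zero_smul, add_zero]
          exact Finset.sum_congr rfl fun k _ => by rw [h2 k]
  -- the tangential Hessian matrix of U
  set Qm : Matrix (Fin (n-1)) (Fin (n-1)) ℝ :=
    Matrix.of fun k j => fderiv ℝ (fderiv ℝ U) (F ξ) (e k) (e j) with hQmdef
  have hQW : W * Qm = c₀ • (1 : Matrix (Fin (n-1)) (Fin (n-1)) ℝ) := by
    ext i j
    rw [Matrix.mul_apply]
    have h1 : ⟪fderiv ℝ p ξ (e i), e j⟫_ℝ = c₀ * ⟪e i, e j⟫_ℝ := by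
      rw [hident]
      have h0 : ⟪ξ, e j⟫_ℝ = 0 := by rw [real_inner_comm]; exact heξ j
      rw [h0, mul_zero, add_zero]
    have h2 : ⟪fderiv ℝ p ξ (e i), e j⟫_ℝ = ∑ k, W i k * Qm k j := by
      rw [hchainp, hAei i, map_sum, sum_inner]
      refine Finset.sum_congr rfl fun k _ => ?_
      rw [map_smul, real_inner_smul_left, hSinner]
      rfl
    rw [← h2, h1, orthonormal_iff_ite.mp he i j]
    simp [Matrix.smul_apply, Matrix.one_apply]
  -- sign of c₀
  have hUnn : ∀ x ∈ Ω, 0 ≤ U x := aux_nonneg hΩc hUsm hlap hbd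
  obtain ⟨z, hz⟩ := hΩint
  have hzlt : ⟪ξ, z - F ξ⟫_ℝ < 0 := by
    obtain ⟨ε, hε, hball⟩ := Metric.mem_nhds_iff.mp (mem_interior_iff_mem_nhds.mp hz)
    have hmem : z + (ε/2) • ξ ∈ Ω := by
      apply hball
      rw [Metric.mem_ball, dist_eq_norm]
      have hh : z + (ε/2) • ξ - z = (ε/2) • ξ := by abel
      rw [hh, norm_smul, Real.norm_eq_abs, abs_of_pos (by linarith), hξ, mul_one]
      linarith
    have h4 := (hFmax ξ hξ).2 _ hmem
    rw [inner_add_right, real_inner_smul_right, hξinner] at h4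
    rw [inner_sub_right]
    nlinarith
  set L2 : ℝ → EuclideanSpace ℝ (Fin n) := fun t => F ξ + t • (z - F ξ) with hL2def
  have hL2d : HasDerivAt L2 (z - F ξ) 0 := by
    have h5 := ((hasDerivAt_id (0:ℝ)).smul_const (z - F ξ)).const_add (F ξ)
    rw [one_smul] at h5
    exact h5
  have hL20 : L2 0 = F ξ := by simp [hL2def]
  have hφd : HasDerivAt (fun t => U (L2 t)) (fderiv ℝ U (F ξ) (z - F ξ)) 0 := by
    have h5 := ((hUdiff (L2 0)).hasFDerivAt).comp_hasDerivAt 0 hL2d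
    rwa [hL20] at h5
  have hd0 : 0 ≤ fderiv ℝ U (F ξ) (z - F ξ) := by
    have hslope := hasDerivAt_iff_tendsto_slope.mp hφd
    have hmono : nhdsWithin (0:ℝ) (Set.Ioi 0) ≤ nhdsWithin 0 {(0:ℝ)}ᶜ :=
      nhdsWithin_mono 0 fun t ht => ne_of_gt ht
    refine ge_of_tendsto (hslope.mono_left hmono) ?_
    filter_upwards [Ioo_mem_nhdsGT (one_pos : (0:ℝ) < 1)] with t ht
    have hmem := hΩconv.add_smul_sub_mem_interior (hfr (hFmax ξ hξ).1) hz
      ⟨ht.1, le_of_lt ht.2⟩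
    have hφt : 0 ≤ U (L2 t) := hUnn _ (interior_subset hmem)
    have hφ0 : U (L2 0) = 0 := by rw [hL20]; exact hbd _ (hFmax ξ hξ).1
    have hsl : slope (fun t => U (L2 t)) 0 t = U (L2 t) / t := by
      rw [slope_def_field]
      rw [hφ0]
      ring
    rw [hsl]
    exact div_nonneg hφt (le_of_lt ht.1)
  have hgFp : gradient U (F ξ) = p ξ := by rw [hpdef, ← hGF]
  have hd2 : fderiv ℝ U (F ξ) (z - F ξ) = c₀ * ⟪ξ, z - F ξ⟫_ℝ := by
    rw [← hgradU, hgFp, hpξ, real_inner_smul_left]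
  have hc₀le : c₀ ≤ 0 := by nlinarith
  have hnormgrad : ‖gradient U (F ξ)‖ = -c₀ := by
    rw [hgFp, hpξ, norm_smul, Real.norm_eq_abs, hξ, mul_one, abs_of_nonpos hc₀le]
  -- final algebra
  have hdetne : W.det ≠ 0 := ne_of_gt hWpos.det_pos
  have hQdiag : ∀ i, W.det * Qm i i = c₀ * W.adjugate i i := by
    intro i
    have h1 : W.adjugate * (W * Qm) = W.det • Qm := by
      rw [← Matrix.mul_assoc, Matrix.adjugate_mul, Matrix.smul_mul, Matrix.one_mul]
    rw [hQW] at h1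
    have h2 := congrFun (congrFun h1 i) i
    simp only [Matrix.mul_smul, Matrix.mul_one, Matrix.smul_apply, smul_eq_mul] at h2
    linarith
  have hsumQ : ∑ i, Qm i i = c₀ * W.det⁻¹ * ∑ i, W.adjugate i i := by
    have h3 : W.det * ∑ i, Qm i i = c₀ * ∑ i, W.adjugate i i := by
      rw [Finset.mul_sum, Finset.mul_sum]
      exact Finset.sum_congr rfl fun i _ => hQdiag i
    have h4 : ∑ i, Qm i i = W.det⁻¹ * (W.det * ∑ i, Qm i i) := by
      field_simp
    rw [h4, h3]
    ring
  rw [iteratedFDeriv_two_apply]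
  have hm0 : (![ξ, ξ] : Fin 2 → EuclideanSpace ℝ (Fin n)) 0 = ξ := rfl
  have hm1 : (![ξ, ξ] : Fin 2 → EuclideanSpace ℝ (Fin n)) 1 = ξ := rfl
  rw [hm0, hm1, hnormgrad]
  have hQm_eq : (∑ i, fderiv ℝ (fderiv ℝ U) (F ξ) (e i) (e i)) = ∑ i, Qm i i := rfl
  rw [hQm_eq] at htrace
  have hfin : fderiv ℝ (fderiv ℝ U) (F ξ) ξ ξ = -2 - ∑ i, Qm i i := by linarith
  rw [hfin, hsumQ]
  ring
end

section
/- With the same hypotheses, the tangential-normal components of the Hessian of the torsion function satisfy (∇²U(F(ξ)) e_i)·ξ = -κ·Σ_j |∇U(F(ξ))|_j·c_{ij}(ξ), where |∇U(F(·))|_j denotes the j-th covariant derivative on S^(n-1) of the function ξ ↦ |∇U(F(ξ))|. -/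
set_option maxHeartbeats 1000000

open scoped InnerProductSpace
open Filter Topology

open scoped InnerProductSpace
open Filter Topology

variable {E : Type*} [NormedAddCommGroup E] [InnerProductSpace ℝ E] [CompleteSpace E]
variable {G : Type*} [NormedAddCommGroup G] [NormedSpace ℝ G]

lemma inner_gradient' (f : E → ℝ) (x y : E) : ⟪gradient f x, y⟫_ℝ = fderiv ℝ f x y := by
  rw [← InnerProductSpace.toDual_apply_apply, gradient, LinearIsometryEquiv.apply_symm_apply]

lemma hasFDerivAt_norm_comp {f : G → E} {f' : G →L[ℝ] E} {x : G}
    (hf : HasFDerivAt f f' x) (h0 : f x ≠ 0) :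
    HasFDerivAt (fun y => ‖f y‖) (‖f x‖⁻¹ • ((innerSL ℝ (f x)).comp f')) x := by
  have hinner : HasFDerivAt (fun y => ⟪f y, f y⟫_ℝ)
      ((innerSL ℝ (f x)).comp f' + (innerSL ℝ (f x)).comp f') x := by
    have := hf.inner ℝ hf
    refine this.congr_fderiv ?_
    ext w
    simp [fderivInnerCLM_apply, real_inner_comm]
  have hQ : ⟪f x, f x⟫_ℝ ≠ 0 := by
    simpa [real_inner_self_eq_norm_sq] using pow_ne_zero 2 (norm_ne_zero_iff.2 h0)
  have hsqrt := (Real.hasDerivAt_sqrt hQ).comp_hasFDerivAt x hinner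
  have heq : (fun y => Real.sqrt ⟪f y, f y⟫_ℝ) = fun y => ‖f y‖ := by
    funext y
    rw [real_inner_self_eq_norm_sq, Real.sqrt_sq (norm_nonneg _)]
  rw [show ((fun x => √x) ∘ fun y => ⟪f y, f y⟫_ℝ) = fun y => √⟪f y, f y⟫_ℝ from rfl, heq] at hsqrt
  refine hsqrt.congr_fderiv ?_
  ext w
  have : Real.sqrt ⟪f x, f x⟫_ℝ = ‖f x‖ := by
    rw [real_inner_self_eq_norm_sq, Real.sqrt_sq (norm_nonneg _)]
  simp only [ContinuousLinearMap.smul_apply, ContinuousLinearMap.add_apply,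
    ContinuousLinearMap.coe_smul', Pi.smul_apply, this]
  field_simp
  ring

set_option linter.unusedSectionVars false

/-- 1-D second derivative test (necessity) -/
lemma secondDeriv_nonneg_of_isLocalMin {f : ℝ → ℝ} (hf : ContDiff ℝ 2 f)
    (hmin : IsLocalMin f 0) : 0 ≤ deriv (deriv f) 0 := by
  by_contra hneg
  push_neg at hneg
  have hd0 : deriv f 0 = 0 := hmin.deriv_eq_zero
  have hder : ContDiff ℝ 1 (deriv f) := by
    have := (contDiff_succ_iff_deriv (n := 1)).mp (by exact_mod_cast hf)
    exact this.2.2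
  have hdd : HasDerivAt (deriv f) (deriv (deriv f) 0) 0 :=
    ((hder.differentiable one_ne_zero) 0).hasDerivAt
  have hslope := hasDerivAt_iff_tendsto_slope.mp hdd
  have hev : ∀ᶠ t in 𝓝[>] (0:ℝ), slope (deriv f) 0 t < 0 := by
    have h1 : ∀ᶠ t in 𝓝[≠] (0:ℝ), slope (deriv f) 0 t < 0 :=
      hslope.eventually_lt_const hneg
    exact Filter.Eventually.filter_mono
      (nhdsWithin_mono 0 (fun t (ht : t ∈ Set.Ioi 0) => ne_of_gt ht)) h1
  -- get an interval (0, δ) where deriv f < 0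
  obtain ⟨u, hu0, hu⟩ := (mem_nhdsGT_iff_exists_Ioo_subset).mp hev
  have hfneg : ∀ t ∈ Set.Ioo (0:ℝ) u, deriv f t < 0 := by
    intro t ht
    have hs := hu ht
    have : slope (deriv f) 0 t < 0 := hs
    rw [slope_def_field] at this
    have := div_neg_iff.mp (by simpa [hd0] using this)
    rcases this with ⟨_, h2⟩ | ⟨h1, _⟩
    · linarith [ht.1]
    · linarith [hd0 ▸ h1]
  -- f is strictly decreasing on [0, u)
  have hanti : StrictAntiOn f (Set.Ico (0:ℝ) u) := by
    apply StrictAntiOn.mono (strictAntiOn_of_deriv_neg (convex_Ico 0 u)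
      (hf.continuous.continuousOn) ?_) (le_refl _)
    · intro t ht
      rw [interior_Ico] at ht
      exact hfneg t ht
  have hcontra : ∀ᶠ t in 𝓝[>] (0:ℝ), f 0 ≤ f t :=
    eventually_nhdsWithin_of_eventually_nhds hmin
  have hmem : ∀ᶠ t in 𝓝[>] (0:ℝ), t ∈ Set.Ioo (0:ℝ) u :=
    Ioo_mem_nhdsGT hu0
  obtain ⟨t, ht1, ht2⟩ := (hcontra.and hmem).exists
  have : f t < f 0 := hanti ⟨le_refl 0, hu0⟩ ⟨le_of_lt ht2.1, ht2.2⟩ ht2.1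
  linarith

lemma directional_second_deriv {n : ℕ} {U : EuclideanSpace ℝ (Fin n) → ℝ}
    (hUsm : ContDiff ℝ 2 U) (x₀ v : EuclideanSpace ℝ (Fin n)) :
    ContDiff ℝ 2 (fun t : ℝ => U (x₀ + t • v)) ∧
      deriv (deriv (fun t : ℝ => U (x₀ + t • v))) 0 =
        fderiv ℝ (fun y => fderiv ℝ U y v) x₀ v := by
  have hc : ∀ t : ℝ, HasDerivAt (fun s : ℝ => x₀ + s • v) v t := fun t => by
    simpa using ((hasDerivAt_id t).smul_const v).const_add x₀
  have hU1 : Differentiable ℝ U := hUsm.differentiable (by norm_num)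
  have hfd1 : ContDiff ℝ 1 (fderiv ℝ U) := hUsm.fderiv_right (by norm_num)
  have hφd : ∀ p, DifferentiableAt ℝ (fun y => fderiv ℝ U y v) p := fun p =>
    ((hfd1.differentiable one_ne_zero) p).clm_apply (differentiableAt_const v)
  constructor
  · exact hUsm.comp (contDiff_const.add ((contDiff_id.smul contDiff_const)))
  · have hline : deriv (fun t : ℝ => U (x₀ + t • v)) =
        fun t => fderiv ℝ U (x₀ + t • v) v := by
      funext t
      exact ((hU1 _).hasFDerivAt.comp_hasDerivAt t (hc t)).deriv
    rw [hline]
    have := ((hφd (x₀ + (0:ℝ) • v)).hasFDerivAt.comp_hasDerivAt 0 (hc 0)).deriv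
    simpa [Function.comp_def] using this

lemma lap_nonneg_of_isLocalMin {n : ℕ} {U : EuclideanSpace ℝ (Fin n) → ℝ}
    (hUsm : ContDiff ℝ 2 U) {x₀ : EuclideanSpace ℝ (Fin n)}
    (hmin : IsLocalMin U x₀) : 0 ≤ lap U x₀ := by
  apply Finset.sum_nonneg
  intro i _
  set v := EuclideanSpace.single i (1:ℝ)
  obtain ⟨hcd, hdd⟩ := directional_second_deriv hUsm x₀ v
  rw [← hdd]
  apply secondDeriv_nonneg_of_isLocalMin hcd
  have h0 : x₀ + (0:ℝ) • v = x₀ := by simp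
  have : IsLocalMin (U ∘ fun t : ℝ => x₀ + t • v) 0 := by
    apply IsLocalMin.comp_continuous (by rw [h0]; exact hmin)
    exact (continuous_const.add (continuous_id.smul continuous_const)).continuousAt
  exact this

lemma torsion_nonneg {n : ℕ} {Ω : Set (EuclideanSpace ℝ (Fin n))}
    (hΩc : IsCompact Ω) (hΩne : Ω.Nonempty) {U : EuclideanSpace ℝ (Fin n) → ℝ}
    (hUsm : ContDiff ℝ 2 U) (hlap : ∀ x ∈ interior Ω, lap U x = -2)
    (hbd : ∀ x ∈ frontier Ω, U x = 0) : ∀ x ∈ Ω, 0 ≤ U x := by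
  obtain ⟨x₀, hx₀Ω, hx₀min⟩ := hΩc.exists_isMinOn hΩne (hUsm.continuous.continuousOn)
  by_cases hint : x₀ ∈ interior Ω
  · exfalso
    have hΩnhds : Ω ∈ nhds x₀ := mem_interior_iff_mem_nhds.mp hint
    have hlocal : IsLocalMin U x₀ := hx₀min.isLocalMin hΩnhds
    have := lap_nonneg_of_isLocalMin hUsm hlocal
    rw [hlap x₀ hint] at this
    linarith
  · have hfr : x₀ ∈ frontier Ω := by
      rw [frontier, hΩc.isClosed.closure_eq]
      exact ⟨hx₀Ω, hint⟩
    intro x hx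
    have := hx₀min hx
    simpa [hbd x₀ hfr] using this

lemma tangent_span_expansion {n : ℕ} (ξ : EuclideanSpace ℝ (Fin n)) (hξ : ‖ξ‖ = 1)
    (e : Fin (n - 1) → EuclideanSpace ℝ (Fin n)) (he : Orthonormal ℝ e)
    (heξ : ∀ i, ⟪e i, ξ⟫_ℝ = 0) (w : EuclideanSpace ℝ (Fin n)) :
    w = ⟪ξ, w⟫_ℝ • ξ + ∑ k, ⟪e k, w⟫_ℝ • e k := by
  have hn : 1 ≤ n := by
    rcases Nat.eq_zero_or_pos n with h0 | h1
    · exfalso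
      subst h0
      have : ξ = 0 := Subsingleton.elim _ _
      rw [this] at hξ
      simp at hξ
    · exact h1
  set f : Fin (n - 1) ⊕ Fin 1 → EuclideanSpace ℝ (Fin n) := Sum.elim e (fun _ => ξ) with hf
  have horth : Orthonormal ℝ f := by
    rw [orthonormal_iff_ite]
    rintro (i | i) (j | j)
    · simpa [hf] using orthonormal_iff_ite.mp he i j
    · simpa [hf] using heξ i
    · have := heξ j
      rw [real_inner_comm] at this
      simpa [hf] using this
    · have : ⟪ξ, ξ⟫_ℝ = 1 := by
        rw [real_inner_self_eq_norm_sq, hξ]; norm_num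
      simpa [hf, Fin.fin_one_eq_zero] using this
  have hcard : Fintype.card (Fin (n - 1) ⊕ Fin 1) =
      Module.finrank ℝ (EuclideanSpace ℝ (Fin n)) := by
    simp [finrank_euclideanSpace_fin]
    omega
  let b := basisOfOrthonormalOfCardEqFinrank horth hcard
  have hb : ⇑b = f := coe_basisOfOrthonormalOfCardEqFinrank horth hcard
  let onb := b.toOrthonormalBasis (by rw [hb]; exact horth)
  have honb : ⇑onb = f := by
    rw [b.coe_toOrthonormalBasis, hb]
  have hexp := onb.sum_repr' w
  rw [Fintype.sum_sum_type] at hexp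
  simp only [honb, hf, Sum.elim_inl, Sum.elim_inr] at hexp
  have hsum1 : ∑ _x : Fin 1, ⟪ξ, w⟫_ℝ • ξ = ⟪ξ, w⟫_ℝ • ξ := by simp
  rw [hsum1, add_comm] at hexp
  exact hexp.symm

lemma differentiableAt_gradient' {f : E → ℝ} {p : E} (hf : ContDiffAt ℝ 2 f p) :
    DifferentiableAt ℝ (gradient f) p := by
  have h1 : ContDiffAt ℝ 1 (fderiv ℝ f) p := hf.fderiv_right (by norm_num)
  have h2 : ContDiffAt ℝ 1 (gradient f) p := by
    have : gradient f = (⇑(InnerProductSpace.toDual ℝ E).symm ∘ fderiv ℝ f) := rfl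
    rw [this]
    exact ((InnerProductSpace.toDual ℝ E).symm.contDiff.contDiffAt).comp p h1
  exact h2.differentiableAt one_ne_zero

lemma fderiv_fderiv_apply' {f : E → ℝ} {p : E} (hf : ContDiffAt ℝ 2 f p) (u w : E) :
    fderiv ℝ (fun y => fderiv ℝ f y w) p u = iteratedFDeriv ℝ 2 f p ![u, w] := by
  have hd : DifferentiableAt ℝ (fderiv ℝ f) p :=
    (hf.fderiv_right (m := 1) (by norm_num)).differentiableAt one_ne_zero
  rw [iteratedFDeriv_two_apply, fderiv_clm_apply hd (differentiableAt_const w)]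
  simp

lemma inner_fderiv_gradient' {f : E → ℝ} {p : E} (hf : ContDiffAt ℝ 2 f p) (u w : E) :
    ⟪fderiv ℝ (gradient f) p u, w⟫_ℝ = iteratedFDeriv ℝ 2 f p ![u, w] := by
  have h1 : (fun y => ⟪gradient f y, w⟫_ℝ) = fun y => fderiv ℝ f y w :=
    funext fun y => inner_gradient' f y w
  have h2 := fderiv_inner_apply ℝ (differentiableAt_gradient' hf) (differentiableAt_const w) u
  calc ⟪fderiv ℝ (gradient f) p u, w⟫_ℝ
      = fderiv ℝ (fun y => ⟪gradient f y, w⟫_ℝ) p u := by rw [h2]; simp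
    _ = fderiv ℝ (fun y => fderiv ℝ f y w) p u := by rw [h1]
    _ = iteratedFDeriv ℝ 2 f p ![u, w] := fderiv_fderiv_apply' hf u w

lemma iFD2_symm' {f : E → ℝ} {p : E} (hf : ContDiffAt ℝ 2 f p) (u w : E) :
    iteratedFDeriv ℝ 2 f p ![u, w] = iteratedFDeriv ℝ 2 f p ![w, u] := by
  have := (hf.isSymmSndFDerivAt (by simp)).eq u w
  rw [iteratedFDeriv_two_apply, iteratedFDeriv_two_apply]
  simpa using this

/-- Lemma 3.2 (iii): tangential-normal components of the Hessian of the torsion function: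
`(∇²U(F(ξ)) e_i) · ξ = -κ Σ_j |∇U(F(ξ))|_j c_{ij}`, where `|∇U(F(·))|_j` is the `j`-th
covariant derivative on `S^{n-1}` of `ξ ↦ |∇U(F(ξ))|` (realized, via the 0-homogeneous
extension of `F`, as the ambient directional derivative along the tangent vector `e j`),
`κ = (det W)⁻¹` the Gauss curvature and `c = adjugate W` the cofactor matrix of the reverse
Weingarten matrix `W = (h_{ij} + h δ_{ij})`. -/
theorem stmt_10 (n : ℕ) (Ω : Set (EuclideanSpace ℝ (Fin n)))
    (hΩc : IsCompact Ω) (hΩconv : Convex ℝ Ω) (hΩint : (interior Ω).Nonempty)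
    (h : EuclideanSpace ℝ (Fin n) → ℝ)
    (hsupp : ∀ x, h x = sSup ((fun y => ⟪x, y⟫_ℝ) '' Ω))
    -- `Ω` of class `C²₊`: `h` is `C²` away from the origin,
    (hsm : ContDiffOn ℝ 2 h {x | x ≠ 0})
    (F : EuclideanSpace ℝ (Fin n) → EuclideanSpace ℝ (Fin n))
    -- `F` is the inverse Gauss map: `F x` is the boundary point with outer normal `x`:
    (hFmax : ∀ x, ‖x‖ = 1 → F x ∈ frontier Ω ∧ ∀ y ∈ Ω, ⟪x, y⟫_ℝ ≤ ⟪x, F x⟫_ℝ)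
    -- extended 0-homogeneously:
    (hF0 : ∀ (a : ℝ), 0 < a → ∀ x, F (a • x) = F x)
    (U : EuclideanSpace ℝ (Fin n) → ℝ)
    -- `U ∈ C²(closure Ω)` solves the torsion problem:
    (hUsm : ContDiff ℝ 2 U)
    (hlap : ∀ x ∈ interior Ω, lap U x = -2)
    (hbd : ∀ x ∈ frontier Ω, U x = 0)
    (ξ : EuclideanSpace ℝ (Fin n)) (hξ : ‖ξ‖ = 1)
    -- a local orthonormal frame of the tangent space at `ξ`:
    (e : Fin (n - 1) → EuclideanSpace ℝ (Fin n)) (he : Orthonormal ℝ e)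
    (heξ : ∀ i, ⟪e i, ξ⟫_ℝ = 0)
    -- the reverse Weingarten matrix `(h_{ij} + h δ_{ij})`:
    (W : Matrix (Fin (n - 1)) (Fin (n - 1)) ℝ)
    (hW : ∀ i j, W i j = iteratedFDeriv ℝ 2 h ξ ![e i, e j])
    -- `W` is positive definite (positive Gauss curvature):
    (hWpos : W.PosDef)
    (hFd : DifferentiableAt ℝ (fun x => ‖gradient U (F x)‖) ξ) :
    ∀ i, iteratedFDeriv ℝ 2 U (F ξ) ![e i, ξ] =
      -(W.det⁻¹ * ∑ j, fderiv ℝ (fun x => ‖gradient U (F x)‖) ξ (e j) * W.adjugate i j) := by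
  -- ### basic facts
  have hξ0 : ξ ≠ 0 := fun h0 => by simp [h0] at hξ
  have hopen : IsOpen {x : EuclideanSpace ℝ (Fin n) | x ≠ 0} := isOpen_compl_singleton
  have hnhds : {x : EuclideanSpace ℝ (Fin n) | x ≠ 0} ∈ 𝓝 ξ := hopen.mem_nhds hξ0
  obtain ⟨z₀, hz₀⟩ := hΩint
  have hΩne : Ω.Nonempty := ⟨z₀, interior_subset hz₀⟩
  have hΩcl : IsClosed Ω := hΩc.isClosed
  have hfrsub : frontier Ω ⊆ Ω := hΩcl.frontier_subset
  have hbdd : ∀ x : EuclideanSpace ℝ (Fin n), BddAbove ((fun y => ⟪x, y⟫_ℝ) '' Ω) :=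
    fun x => (hΩc.image (innerSL ℝ x).continuous).bddAbove
  have hle : ∀ x, ∀ y ∈ Ω, ⟪x, y⟫_ℝ ≤ h x := by
    intro x y hy
    rw [hsupp x]
    exact le_csSup (hbdd x) ⟨y, hy, rfl⟩
  have heq : ∀ x, ‖x‖ = 1 → h x = ⟪x, F x⟫_ℝ := by
    intro x hx
    refine le_antisymm ?_ (hle x (F x) (hfrsub (hFmax x hx).1))
    rw [hsupp x]
    refine csSup_le (hΩne.image _) ?_
    rintro _ ⟨y, hy, rfl⟩
    exact (hFmax x hx).2 y hy
  have hcd : ∀ z : EuclideanSpace ℝ (Fin n), z ≠ 0 → ContDiffAt ℝ 2 h z :=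
    fun z hz => hsm.contDiffAt (hopen.mem_nhds hz)
  have hhd : ∀ z : EuclideanSpace ℝ (Fin n), z ≠ 0 → DifferentiableAt ℝ h z :=
    fun z hz => (hcd z hz).differentiableAt (by norm_num)
  -- ### homogeneity of h
  have hhom : ∀ a : ℝ, 0 < a → ∀ x, h (a • x) = a * h x := by
    intro a ha x
    refine le_antisymm ?_ ?_
    · rw [hsupp (a • x)]
      refine csSup_le (hΩne.image _) ?_
      rintro _ ⟨y, hy, rfl⟩
      show ⟪a • x, y⟫_ℝ ≤ a * h x
      rw [real_inner_smul_left]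
      exact mul_le_mul_of_nonneg_left (hle x y hy) ha.le
    · have hxle : h x ≤ a⁻¹ * h (a • x) := by
        rw [hsupp x]
        refine csSup_le (hΩne.image _) ?_
        rintro _ ⟨y, hy, rfl⟩
        have h1 : ⟪x, y⟫_ℝ = a⁻¹ * ⟪a • x, y⟫_ℝ := by
          rw [real_inner_smul_left]
          field_simp
        show ⟪x, y⟫_ℝ ≤ a⁻¹ * h (a • x)
        rw [h1]
        exact mul_le_mul_of_nonneg_left (hle (a • x) y hy) (inv_pos.2 ha).le
      calc a * h x ≤ a * (a⁻¹ * h (a • x)) := mul_le_mul_of_nonneg_left hxle ha.le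
        _ = h (a • x) := by field_simp
  -- ### gradient of h is F on the unit sphere
  have hG : ∀ z : EuclideanSpace ℝ (Fin n), ‖z‖ = 1 → gradient h z = F z := by
    intro z hz1
    have hz0 : z ≠ 0 := fun h0 => by simp [h0] at hz1
    set φ : EuclideanSpace ℝ (Fin n) → ℝ := fun y => h y - ⟪F z, y⟫_ℝ with hφ
    have hφ0 : ∀ y, 0 ≤ φ y := by
      intro y
      have := hle y (F z) (hfrsub (hFmax z hz1).1)
      rw [real_inner_comm] at this
      simpa [hφ] using this
    have hφz : φ z = 0 := by
      have h2 := heq z hz1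
      rw [real_inner_comm] at h2
      show h z - ⟪F z, z⟫_ℝ = 0
      rw [← h2]
      ring
    have hmin : IsLocalMin φ z := Filter.Eventually.of_forall (fun y => by
      rw [hφz]; exact hφ0 y)
    have hfd0 : fderiv ℝ φ z = 0 := hmin.fderiv_eq_zero
    have hder : fderiv ℝ h z = innerSL ℝ (F z) := by
      have hlin : fderiv ℝ (fun y => ⟪F z, y⟫_ℝ) z = innerSL ℝ (F z) :=
        (innerSL ℝ (F z)).fderiv
      have hsub : fderiv ℝ φ z = fderiv ℝ h z - innerSL ℝ (F z) := by
        have hhas : HasFDerivAt φ (fderiv ℝ h z - innerSL ℝ (F z)) z :=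
          (hhd z hz0).hasFDerivAt.sub ((innerSL ℝ (F z)).hasFDerivAt)
        exact hhas.fderiv
      rw [hsub] at hfd0
      exact sub_eq_zero.1 hfd0
    have htd : InnerProductSpace.toDual ℝ (EuclideanSpace ℝ (Fin n)) (F z)
        = innerSL ℝ (F z) := by
      ext y
      simp [InnerProductSpace.toDual_apply_apply]
    rw [gradient, hder, ← htd, LinearIsometryEquiv.symm_apply_apply]
  -- ### radial second derivative of h vanishes
  have hgradhom : ∀ u, fderiv ℝ (fun y => fderiv ℝ h y u) ξ ξ = 0 := by
    have hfd_eq : ∀ a : ℝ, 0 < a → fderiv ℝ h (a • ξ) = fderiv ℝ h ξ := by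
      intro a ha
      have haξ : a • ξ ≠ 0 := smul_ne_zero (ne_of_gt ha) hξ0
      have hL : HasFDerivAt (fun x => h (a • x))
          ((fderiv ℝ h (a • ξ)).comp (a • ContinuousLinearMap.id ℝ
            (EuclideanSpace ℝ (Fin n)))) ξ := by
        have hc : HasFDerivAt (fun x : EuclideanSpace ℝ (Fin n) => a • x)
            (a • ContinuousLinearMap.id ℝ (EuclideanSpace ℝ (Fin n))) ξ :=
          ((ContinuousLinearMap.id ℝ (EuclideanSpace ℝ (Fin n))).hasFDerivAt).const_smul a
        exact (hhd (a • ξ) haξ).hasFDerivAt.comp ξ hc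
      have hR : HasFDerivAt (fun x => h (a • x)) (a • fderiv ℝ h ξ) ξ := by
        have : HasFDerivAt (fun x => a * h x) (a • fderiv ℝ h ξ) ξ :=
          (hhd ξ hξ0).hasFDerivAt.const_mul a
        have heqf : (fun x => a * h x) = fun x => h (a • x) := by
          funext x
          rw [hhom a ha x]
        rwa [heqf] at this
      have huniq := hL.unique hR
      ext w
      have := congrFun (congrArg (fun (L : EuclideanSpace ℝ (Fin n) →L[ℝ]
        ℝ) => (L : EuclideanSpace ℝ (Fin n) → ℝ)) huniq) w
      simp only [ContinuousLinearMap.coe_comp', Function.comp_apply,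
        ContinuousLinearMap.coe_smul', Pi.smul_apply, ContinuousLinearMap.coe_id', id_eq,
        smul_eq_mul] at this
      have h2 : fderiv ℝ h (a • ξ) (a • w) = a * fderiv ℝ h ξ w := this
      rw [map_smul, smul_eq_mul] at h2
      exact mul_left_cancel₀ (ne_of_gt ha) h2
    intro u
    set ψ : EuclideanSpace ℝ (Fin n) → ℝ := fun y => fderiv ℝ h y u with hψ
    have hψd : DifferentiableAt ℝ ψ ξ := by
      have h1 : DifferentiableAt ℝ (fderiv ℝ h) ξ :=
        ((hcd ξ hξ0).fderiv_right (m := 1) (by norm_num)).differentiableAt one_ne_zero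
      exact h1.clm_apply (differentiableAt_const u)
    have hcurve : ∀ t : ℝ, HasDerivAt (fun s : ℝ => (1 + s) • ξ) ξ t := by
      intro t
      simpa using (((hasDerivAt_id t).const_add 1).smul_const ξ)
    have hcomp : HasDerivAt (fun t : ℝ => ψ ((1 + t) • ξ)) (fderiv ℝ ψ ξ ξ) 0 := by
      have h1 : HasFDerivAt ψ (fderiv ℝ ψ ξ) ((1 + (0:ℝ)) • ξ) := by
        simpa using hψd.hasFDerivAt
      simpa [Function.comp_def] using h1.comp_hasDerivAt 0 (hcurve 0)
    have hev : (fun t : ℝ => ψ ((1 + t) • ξ)) =ᶠ[𝓝 (0:ℝ)] fun _ => ψ ξ := by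
      have hgt : ∀ᶠ t : ℝ in 𝓝 0, -1 < t := eventually_gt_nhds (by norm_num)
      filter_upwards [hgt] with t ht
      have hpos : (0:ℝ) < 1 + t := by linarith
      show fderiv ℝ h ((1 + t) • ξ) u = fderiv ℝ h ξ u
      rw [hfd_eq (1 + t) hpos]
    have hd1 : deriv (fun t : ℝ => ψ ((1 + t) • ξ)) 0 = fderiv ℝ ψ ξ ξ := hcomp.deriv
    have hd2 : deriv (fun t : ℝ => ψ ((1 + t) • ξ)) 0 = 0 := by
      rw [hev.deriv_eq]
      exact deriv_const 0 _
    rw [← hd1, hd2]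
  -- ### the retraction r
  set r : EuclideanSpace ℝ (Fin n) → EuclideanSpace ℝ (Fin n) := fun x => ‖x‖⁻¹ • x with hr
  have hr1 : r ξ = ξ := by simp [hr, hξ]
  have hrunit : ∀ x : EuclideanSpace ℝ (Fin n), x ≠ 0 → ‖r x‖ = 1 := by
    intro x hx
    rw [hr]
    simp [norm_smul, abs_of_nonneg, inv_mul_cancel₀ (norm_ne_zero_iff.2 hx)]
  have hFG : ∀ x : EuclideanSpace ℝ (Fin n), x ≠ 0 → F x = gradient h (r x) := by
    intro x hx
    rw [hG (r x) (hrunit x hx), hr]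
    exact (hF0 ‖x‖⁻¹ (inv_pos.2 (norm_pos_iff.2 hx)) x).symm
  have hFru : ∀ x : EuclideanSpace ℝ (Fin n), x ≠ 0 → F x ∈ frontier Ω := by
    intro x hx
    have : F x = F (r x) := (hF0 ‖x‖⁻¹ (inv_pos.2 (norm_pos_iff.2 hx)) x).symm
    rw [this]
    exact (hFmax (r x) (hrunit x hx)).1
  -- derivative of r at ξ
  obtain ⟨Dr, hrd, hDre⟩ : ∃ Dr : EuclideanSpace ℝ (Fin n) →L[ℝ] EuclideanSpace ℝ (Fin n),
      HasFDerivAt r Dr ξ ∧ ∀ j, Dr (e j) = e j := by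
    have hnorm : HasFDerivAt (fun x : EuclideanSpace ℝ (Fin n) => ‖x‖)
        (‖(id ξ : EuclideanSpace ℝ (Fin n))‖⁻¹ • ((innerSL ℝ (id ξ)).comp
          (ContinuousLinearMap.id ℝ (EuclideanSpace ℝ (Fin n))))) ξ :=
      hasFDerivAt_norm_comp (hasFDerivAt_id ξ) (by simpa using hξ0)
    have hinv := (hasDerivAt_inv (by simp [hξ] : ‖(ξ : EuclideanSpace ℝ (Fin n))‖ ≠ 0)).comp_hasFDerivAt ξ hnorm
    have hsmul := hinv.smul (hasFDerivAt_id ξ)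
    refine ⟨_, hsmul, ?_⟩
    intro j
    have hinner : ⟪ξ, e j⟫_ℝ = 0 := by
      rw [real_inner_comm]; exact heξ j
    simp [hξ, hinner]
  -- ### derivative data for h's gradient
  have hghd : DifferentiableAt ℝ (gradient h) ξ := differentiableAt_gradient' (hcd ξ hξ0)
  have hDGe : ∀ j, fderiv ℝ (gradient h) ξ (e j) = ∑ k, W j k • e k := by
    intro j
    set w : EuclideanSpace ℝ (Fin n) := fderiv ℝ (gradient h) ξ (e j) with hwdef
    have hexp := tangent_span_expansion ξ hξ e he heξ w
    have hrad : ⟪ξ, w⟫_ℝ = 0 := by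
      rw [real_inner_comm]
      rw [hwdef, inner_fderiv_gradient' (hcd ξ hξ0) (e j) ξ]
      rw [iFD2_symm' (hcd ξ hξ0) (e j) ξ]
      rw [← fderiv_fderiv_apply' (hcd ξ hξ0) ξ (e j)]
      exact hgradhom (e j)
    have htan : ∀ k, ⟪e k, w⟫_ℝ = W j k := by
      intro k
      rw [real_inner_comm, hwdef, inner_fderiv_gradient' (hcd ξ hξ0) (e j) (e k)]
      exact (hW j k).symm
    rw [hexp, hrad]
    simp only [htan, zero_smul, zero_add]
  -- ### the vector field v and its derivative
  set v : EuclideanSpace ℝ (Fin n) → EuclideanSpace ℝ (Fin n) :=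
    fun x => gradient U (gradient h (r x)) with hv
  have hGmap : gradient h (r ξ) = F ξ := by rw [hr1]; exact hG ξ hξ
  have hgU1 : ContDiff ℝ 1 (gradient U) := by
    have : gradient U = (⇑(InnerProductSpace.toDual ℝ (EuclideanSpace ℝ (Fin n))).symm ∘
        fderiv ℝ U) := rfl
    rw [this]
    exact (InnerProductSpace.toDual ℝ _).symm.contDiff.comp (hUsm.fderiv_right (by norm_num))
  have hcomp1 : HasFDerivAt (fun x => gradient h (r x))
      ((fderiv ℝ (gradient h) ξ).comp Dr) ξ := by
    have h' : HasFDerivAt (gradient h) (fderiv ℝ (gradient h) ξ) (r ξ) := by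
      rw [hr1]; exact hghd.hasFDerivAt
    exact h'.comp ξ hrd
  obtain ⟨Dv, hvd, hDv⟩ : ∃ Dv : EuclideanSpace ℝ (Fin n) →L[ℝ] EuclideanSpace ℝ (Fin n),
      HasFDerivAt v Dv ξ ∧
        ∀ u, Dv u = fderiv ℝ (gradient U) (F ξ) (fderiv ℝ (gradient h) ξ (Dr u)) := by
    refine ⟨(fderiv ℝ (gradient U) (F ξ)).comp ((fderiv ℝ (gradient h) ξ).comp Dr), ?_, ?_⟩
    · have hd := (hgU1.differentiable one_ne_zero (gradient h (r ξ))).hasFDerivAt.comp ξ hcomp1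
      rwa [hGmap] at hd
    · intro u; rfl
  set A : Fin (n - 1) → ℝ := fun k => iteratedFDeriv ℝ 2 U (F ξ) ![e k, ξ] with hA
  have hDvA : ∀ j, ⟪Dv (e j), ξ⟫_ℝ = ∑ k, W j k * A k := by
    intro j
    rw [hDv (e j), hDre j, hDGe j, map_sum]
    rw [sum_inner]
    refine Finset.sum_congr rfl ?_
    intro k _
    rw [map_smul, real_inner_smul_left]
    congr 1
    exact inner_fderiv_gradient' (hUsm.contDiffAt) (e k) ξ
  -- ### the gradient of U at F ξ is radial: v ξ = c • ξ with c ≤ 0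
  have hdet : W.det ≠ 0 := ne_of_gt hWpos.det_pos
  have hWinj : ∀ a : Fin (n - 1) → ℝ, W.mulVec a = 0 → a = 0 := by
    intro a ha
    have hinj := Matrix.mulVec_injective_iff_isUnit.2
      ((Matrix.isUnit_iff_isUnit_det W).2 (isUnit_iff_ne_zero.2 hdet))
    exact hinj (by rw [ha, Matrix.mulVec_zero])
  have htang : ∀ k, ⟪gradient U (F ξ), e k⟫_ℝ = 0 := by
    have hU1 : Differentiable ℝ U := hUsm.differentiable (by norm_num)
    have hUF : (fun x => U (gradient h (r x))) =ᶠ[𝓝 ξ] fun _ => 0 := by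
      filter_upwards [hnhds] with x hx
      have h1 : gradient h (r x) = F x := (hFG x hx).symm
      rw [h1]
      exact hbd (F x) (hFru x hx)
    have hchain : HasFDerivAt (fun x => U (gradient h (r x)))
        ((fderiv ℝ U (F ξ)).comp ((fderiv ℝ (gradient h) ξ).comp Dr)) ξ := by
      have h2 : HasFDerivAt U (fderiv ℝ U (F ξ)) (gradient h (r ξ)) := by
        rw [hGmap]
        exact (hU1 (F ξ)).hasFDerivAt
      exact h2.comp ξ hcomp1
    have hzero : (fderiv ℝ U (F ξ)).comp ((fderiv ℝ (gradient h) ξ).comp Dr) = 0 := by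
      rw [← hchain.fderiv, hUF.fderiv_eq]
      exact fderiv_const_apply 0
    have hz : ∀ j, ∑ k, W j k * ⟪gradient U (F ξ), e k⟫_ℝ = 0 := by
      intro j
      have h3 := congrFun (congrArg (fun (L : EuclideanSpace ℝ (Fin n) →L[ℝ] ℝ) =>
        (L : EuclideanSpace ℝ (Fin n) → ℝ)) hzero) (e j)
      simp only [ContinuousLinearMap.coe_comp', Function.comp_apply,
        ContinuousLinearMap.zero_apply, ContinuousLinearMap.coe_zero, Pi.zero_apply] at h3
      rw [hDre j, hDGe j, map_sum] at h3
      rw [← h3]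
      refine Finset.sum_congr rfl ?_
      intro k _
      rw [map_smul, smul_eq_mul]
      congr 1
      rw [inner_gradient' U (F ξ) (e k)]
    have hmv : W.mulVec (fun k => ⟪gradient U (F ξ), e k⟫_ℝ) = 0 := by
      funext j
      simpa [Matrix.mulVec, dotProduct] using hz j
    intro k
    exact congrFun (hWinj _ hmv) k
  set c : ℝ := ⟪ξ, gradient U (F ξ)⟫_ℝ with hc
  have hvc : gradient U (F ξ) = c • ξ := by
    have hexp := tangent_span_expansion ξ hξ e he heξ (gradient U (F ξ))
    rw [hexp]
    have : ∀ k, ⟪e k, gradient U (F ξ)⟫_ℝ = 0 := by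
      intro k
      rw [real_inner_comm]
      exact htang k
    simp [this, hc]
  have hcnp : c ≤ 0 := by
    have hUnn : ∀ x ∈ Ω, 0 ≤ U x := torsion_nonneg hΩc hΩne hUsm hlap hbd
    have hFξΩ : F ξ ∈ Ω := hfrsub (hFmax ξ hξ).1
    have hU1 : Differentiable ℝ U := hUsm.differentiable (by norm_num)
    set d : EuclideanSpace ℝ (Fin n) := z₀ - F ξ with hd
    have hseg : ∀ t : ℝ, t ∈ Set.Icc (0:ℝ) 1 → F ξ + t • d ∈ Ω := by
      intro t ht
      have : F ξ + t • d = (1 - t) • F ξ + t • z₀ := by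
        rw [hd, sub_smul, one_smul, smul_sub]
        abel
      rw [this]
      exact hΩconv hFξΩ (interior_subset hz₀) (by linarith [ht.1, ht.2]) ht.1 (by ring)
    have hm0 : U (F ξ) = 0 := hbd (F ξ) (hFmax ξ hξ).1
    have hline : ∀ t : ℝ, HasDerivAt (fun s : ℝ => F ξ + s • d) d t := fun t => by
      simpa using ((hasDerivAt_id t).smul_const d).const_add (F ξ)
    have hmd : HasDerivAt (fun t : ℝ => U (F ξ + t • d)) (fderiv ℝ U (F ξ) d) 0 := by
      have h1 : HasFDerivAt U (fderiv ℝ U (F ξ)) (F ξ + (0:ℝ) • d) := by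
        simpa using (hU1 (F ξ)).hasFDerivAt
      simpa [Function.comp_def] using h1.comp_hasDerivAt 0 (hline 0)
    have hslope := hasDerivAt_iff_tendsto_slope.mp hmd
    have hslope' : Tendsto (slope (fun t : ℝ => U (F ξ + t • d)) 0) (𝓝[>] (0:ℝ))
        (𝓝 (fderiv ℝ U (F ξ) d)) :=
      hslope.mono_left (nhdsWithin_mono 0 (fun t (ht : t ∈ Set.Ioi 0) => ne_of_gt ht))
    have hnn : 0 ≤ fderiv ℝ U (F ξ) d := by
      refine ge_of_tendsto hslope' ?_
      filter_upwards [Ioo_mem_nhdsGT one_pos] with t ht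
      rw [slope_def_field]
      have hU0 : 0 ≤ U (F ξ + t • d) := hUnn _ (hseg t ⟨ht.1.le, ht.2.le⟩)
      have hf0 : U (F ξ + (0:ℝ) • d) = 0 := by rw [zero_smul, add_zero]; exact hm0
      simp only [hf0, sub_zero]
      exact div_nonneg hU0 ht.1.le
    have hrad : fderiv ℝ U (F ξ) d = c * ⟪ξ, d⟫_ℝ := by
      rw [← inner_gradient' U (F ξ) d, hvc, real_inner_smul_left]
    have hξd : ⟪ξ, d⟫_ℝ < 0 := by
      obtain ⟨ε, hε, hball⟩ := Metric.isOpen_iff.mp isOpen_interior z₀ hz₀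
      have hz' : z₀ + (ε / 2) • ξ ∈ Ω := by
        apply interior_subset
        apply hball
        rw [Metric.mem_ball, dist_eq_norm, add_sub_cancel_left, norm_smul, hξ]
        rw [Real.norm_eq_abs, abs_of_pos (by linarith), mul_one]
        linarith
      have hle' := (hFmax ξ hξ).2 _ hz'
      rw [inner_add_right, real_inner_smul_right, real_inner_self_eq_norm_sq, hξ] at hle'
      rw [hd, inner_sub_right]
      nlinarith
    rw [hrad] at hnn
    by_contra hpos
    push_neg at hpos
    nlinarith
  -- ### conclusion
  intro i
  have hAi : iteratedFDeriv ℝ 2 U (F ξ) ![e i, ξ] = A i := rfl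
  rw [hAi]
  have hveq : (fun x => ‖gradient U (F x)‖) =ᶠ[𝓝 ξ] (fun x => ‖v x‖) := by
    filter_upwards [hnhds] with x hx
    rw [hFG x hx]
  have hvξ : v ξ = c • ξ := by
    show gradient U (gradient h (r ξ)) = c • ξ
    rw [hGmap]
    exact hvc
  have hadj : ∀ k, (∑ j, W.adjugate i j * W j k) = W.det * (if i = k then 1 else 0) := by
    intro k
    have h4 := congrFun (congrFun (Matrix.adjugate_mul W) i) k
    simpa [Matrix.mul_apply, Matrix.one_apply] using h4
  rcases hcnp.lt_or_eq with hlt | heq0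
  · -- c < 0
    have hv0 : v ξ ≠ 0 := by
      rw [hvξ]
      exact smul_ne_zero (ne_of_lt hlt) hξ0
    have hnormd := hasFDerivAt_norm_comp hvd hv0
    have hgf : fderiv ℝ (fun x => ‖gradient U (F x)‖) ξ =
        ‖v ξ‖⁻¹ • ((innerSL ℝ (v ξ)).comp Dv) := by
      rw [hveq.fderiv_eq]
      exact hnormd.fderiv
    have hnv : ‖v ξ‖ = -c := by
      rw [hvξ, norm_smul, hξ, Real.norm_eq_abs, abs_of_neg hlt, mul_one]
    have hdg : ∀ j, fderiv ℝ (fun x => ‖gradient U (F x)‖) ξ (e j) =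
        -(∑ k, W j k * A k) := by
      intro j
      rw [hgf]
      have h1 : ⟪v ξ, Dv (e j)⟫_ℝ = c * ⟪Dv (e j), ξ⟫_ℝ := by
        rw [hvξ, real_inner_smul_left, real_inner_comm]
      simp only [ContinuousLinearMap.smul_apply, ContinuousLinearMap.coe_comp',
        Function.comp_apply, innerSL_apply_apply, smul_eq_mul]
      rw [h1, hnv, hDvA j]
      have hc0 : c ≠ 0 := ne_of_lt hlt
      field_simp
    have hsum : ∑ j, fderiv ℝ (fun x => ‖gradient U (F x)‖) ξ (e j) * W.adjugate i j =
        -(W.det * A i) := by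
      calc ∑ j, fderiv ℝ (fun x => ‖gradient U (F x)‖) ξ (e j) * W.adjugate i j
          = ∑ j, (-(∑ k, W j k * A k)) * W.adjugate i j := by
            exact Finset.sum_congr rfl (fun j _ => by rw [hdg j])
        _ = -(∑ j, ∑ k, W.adjugate i j * W j k * A k) := by
            rw [← Finset.sum_neg_distrib]
            refine Finset.sum_congr rfl (fun j _ => ?_)
            rw [neg_mul, Finset.sum_mul]
            congr 1
            exact Finset.sum_congr rfl (fun k _ => by ring)
        _ = -(∑ k, (∑ j, W.adjugate i j * W j k) * A k) := by
            rw [Finset.sum_comm]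
            congr 1
            exact Finset.sum_congr rfl (fun k _ => by rw [Finset.sum_mul])
        _ = -(W.det * A i) := by
            congr 1
            simp only [hadj]
            rw [Finset.sum_congr rfl (fun k _ => by rw [mul_assoc])]
            rw [← Finset.mul_sum]
            congr 1
            simp [Finset.sum_ite_eq]
    rw [hsum, mul_neg, neg_neg, ← mul_assoc, inv_mul_cancel₀ hdet, one_mul]
  · -- c = 0
    have hvz : gradient U (F ξ) = 0 := by rw [hvc, heq0, zero_smul]
    have hgzero : fderiv ℝ (fun x => ‖gradient U (F x)‖) ξ = 0 := by
      have hmin : IsLocalMin (fun x => ‖gradient U (F x)‖) ξ :=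
        Filter.Eventually.of_forall (fun y => by simp [hvz])
      exact hmin.fderiv_eq_zero
    have hDvz : ∀ w : EuclideanSpace ℝ (Fin n), Dv w = 0 := by
      intro w
      set l : ℝ → EuclideanSpace ℝ (Fin n) := fun t => ξ + t • w with hl
      have hl0 : l 0 = ξ := by simp [hl]
      have hld : ∀ t : ℝ, HasDerivAt l w t := fun t => by
        simpa [hl] using ((hasDerivAt_id t).smul_const w).const_add ξ
      have hvline : HasDerivAt (fun t => v (l t)) (Dv w) 0 := by
        have h1 : HasFDerivAt v Dv (l 0) := by rw [hl0]; exact hvd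
        simpa [Function.comp_def] using h1.comp_hasDerivAt 0 (hld 0)
      have h2 : Filter.Tendsto (fun t => ‖slope (fun s => v (l s)) 0 t‖) (𝓝[≠] (0:ℝ))
          (𝓝 ‖Dv w‖) :=
        (continuous_norm.tendsto _).comp (hasDerivAt_iff_tendsto_slope.mp hvline)
      have hgl : HasDerivAt (fun t => ‖gradient U (F (l t))‖) 0 0 := by
        have h1 : HasFDerivAt (fun x => ‖gradient U (F x)‖)
            (fderiv ℝ (fun x => ‖gradient U (F x)‖) ξ) (l 0) := by
          rw [hl0]; exact hFd.hasFDerivAt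
        have h3 := h1.comp_hasDerivAt 0 (hld 0)
        rw [hgzero] at h3
        simpa [Function.comp_def] using h3
      have h4 : Filter.Tendsto (fun t => |slope (fun s => ‖gradient U (F (l s))‖) 0 t|)
          (𝓝[≠] (0:ℝ)) (𝓝 0) := by
        have := (hasDerivAt_iff_tendsto_slope.mp hgl).abs
        simpa using this
      have hlne : ∀ᶠ t in 𝓝[≠] (0:ℝ), l t ≠ 0 := by
        have hc : ContinuousAt l 0 := (hld 0).continuousAt
        have := hc.preimage_mem_nhds (by rw [hl0]; exact hnhds)
        exact eventually_nhdsWithin_of_eventually_nhds this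
      have hEq : (fun t => ‖slope (fun s => v (l s)) 0 t‖) =ᶠ[𝓝[≠] (0:ℝ)]
          (fun t => |slope (fun s => ‖gradient U (F (l s))‖) 0 t|) := by
        filter_upwards [hlne, self_mem_nhdsWithin] with t hlt (htne : t ≠ 0)
        have hvl0 : v (l 0) = 0 := by
          rw [hl0]
          show gradient U (gradient h (r ξ)) = 0
          rw [hGmap]
          exact hvz
        have hgl0 : ‖gradient U (F (l 0))‖ = 0 := by
          rw [hl0, hvz, norm_zero]
        have hgv : ‖gradient U (F (l t))‖ = ‖v (l t)‖ := by rw [hFG (l t) hlt]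
        rw [slope_def_module, slope_def_field, hvl0, hgl0, sub_zero, sub_zero, sub_zero]
        rw [norm_smul, hgv, div_eq_inv_mul, abs_mul, abs_norm, Real.norm_eq_abs]
      have h5 : Filter.Tendsto (fun t => |slope (fun s => ‖gradient U (F (l s))‖) 0 t|)
          (𝓝[≠] (0:ℝ)) (𝓝 ‖Dv w‖) := h2.congr' hEq
      have := tendsto_nhds_unique h5 h4
      exact norm_eq_zero.mp this
    have hAz : ∀ k, A k = 0 := by
      have hmv : W.mulVec A = 0 := by
        funext j
        have := hDvA j
        rw [hDvz (e j)] at this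
        simp only [inner_zero_left] at this
        simpa [Matrix.mulVec, dotProduct] using this.symm
      intro k
      exact congrFun (hWinj A hmv) k
    rw [hAz i]
    have : ∀ j, fderiv ℝ (fun x => ‖gradient U (F x)‖) ξ (e j) = 0 := by
      intro j
      rw [hgzero]
      rfl
    simp [this]
end
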